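/- arXiv:1909.02353 — 13 statements merged into one kernel-verified Lean document; each statement's English description precedes it below -/
import Mathlib

section
/- Let (f,M) be a polymatroid, let F1,F2 be flats of (f,M), let 𝓜=𝓜(F1,F2) be the modular cut generated by F1 and F2, and set S=F1∩F2. Assume S∉𝓜 (so 𝓜 is non-principal) and that δ(F1,F2)=δ(𝓜). Then for every F∈𝓜: (a) S⊆F, and (b) f(F)−f(S)>δ(𝓜). -/
open scoped Classical

/-- A polymatroid on the finite ground set `M`: `f` is zero on the empty set,
nonnegative, monotone and submodular on subsets of `M`. -/
def IsPolymatroid {α : Type*} [DecidableEq α] (M : Finset α) (f : Finset α → ℝ) : Prop :=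
  f ∅ = 0 ∧
  (∀ A, A ⊆ M → 0 ≤ f A) ∧
  (∀ A B, A ⊆ B → B ⊆ M → f A ≤ f B) ∧
  (∀ A B, A ⊆ M → B ⊆ M → f (A ∪ B) + f (A ∩ B) ≤ f A + f B)

/-- `F` is a flat of the polymatroid `(f, M)`: every proper superset inside `M`
has strictly larger rank. -/
def IsFlat {α : Type*} [DecidableEq α] (M : Finset α) (f : Finset α → ℝ) (F : Finset α) : Prop :=
  F ⊆ M ∧ ∀ G, F ⊂ G → G ⊆ M → f F < f G

/-- The modular defect of a pair of subsets. -/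
def modularDefect {α : Type*} [DecidableEq α] (f : Finset α → ℝ) (A B : Finset α) : ℝ :=
  f A + f B - f (A ∩ B) - f (A ∪ B)

/-- A modular cut: a collection of flats, closed upwards among flats,
and closed under intersections of modular pairs. -/
def IsModularCut {α : Type*} [DecidableEq α] (M : Finset α) (f : Finset α → ℝ)
    (𝓜 : Set (Finset α)) : Prop :=
  (∀ F ∈ 𝓜, IsFlat M f F) ∧
  (∀ F₁ ∈ 𝓜, ∀ F₂, IsFlat M f F₂ → F₁ ⊆ F₂ → F₂ ∈ 𝓜) ∧
  (∀ F₁ ∈ 𝓜, ∀ F₂ ∈ 𝓜, modularDefect f F₁ F₂ = 0 → F₁ ∩ F₂ ∈ 𝓜)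

/-- A modular cut is principal if it is empty or the intersection of all of its
elements (taken inside the ground set `M`) is one of its elements. -/
def IsPrincipal {α : Type*} [DecidableEq α] (M : Finset α) (𝓜 : Set (Finset α)) : Prop :=
  𝓜 = ∅ ∨ (M.filter fun x => ∀ F ∈ 𝓜, x ∈ F) ∈ 𝓜

/-- `(g, N)` is an extension of the polymatroid `(f, M)`. -/
def IsExtension {α : Type*} [DecidableEq α] (M : Finset α) (f : Finset α → ℝ)
    (N : Finset α) (g : Finset α → ℝ) : Prop :=
  M ⊆ N ∧ IsPolymatroid N g ∧ ∀ A, A ⊆ M → g A = f A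

/-- `h` is an amalgam of the two extensions `(g₁, N₁)` and `(g₂, N₂)`. -/
def IsAmalgam {α : Type*} [DecidableEq α] (N₁ : Finset α) (g₁ : Finset α → ℝ)
    (N₂ : Finset α) (g₂ : Finset α → ℝ) (h : Finset α → ℝ) : Prop :=
  IsPolymatroid (N₁ ∪ N₂) h ∧ (∀ A, A ⊆ N₁ → h A = g₁ A) ∧ (∀ A, A ⊆ N₂ → h A = g₂ A)

/-- A polymatroid is sticky if every two extensions intersecting exactly
in the ground set have an amalgam. -/
def Sticky {α : Type*} [DecidableEq α] (M : Finset α) (f : Finset α → ℝ) : Prop :=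
  ∀ N₁ g₁ N₂ g₂, IsExtension M f N₁ g₁ → IsExtension M f N₂ g₂ → N₁ ∩ N₂ = M →
    ∃ h, IsAmalgam N₁ g₁ N₂ g₂ h

/-- If the modular cut `𝓜` is generated by the flats `F₁, F₂`,
`S = F₁ ∩ F₂ ∉ 𝓜`, and `δ(F₁,F₂) = δ(𝓜)` (i.e. `δ(F₁,F₂)` is minimal among the
modular defects of pairs of members of `𝓜` whose intersection is not in `𝓜`),
then every `F ∈ 𝓜` satisfies `S ⊆ F` and `f F - f S > δ(𝓜)`. -/
theorem statement_1 {α : Type*} [DecidableEq α]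
    (M : Finset α) (f : Finset α → ℝ) (hf : IsPolymatroid M f)
    (F₁ F₂ : Finset α) (hF₁ : IsFlat M f F₁) (hF₂ : IsFlat M f F₂)
    (𝓜 : Set (Finset α)) (h𝓜 : IsModularCut M f 𝓜)
    (hF₁mem : F₁ ∈ 𝓜) (hF₂mem : F₂ ∈ 𝓜)
    (hgen : ∀ 𝓝 : Set (Finset α), IsModularCut M f 𝓝 → F₁ ∈ 𝓝 → F₂ ∈ 𝓝 → 𝓜 ⊆ 𝓝)
    (hS : F₁ ∩ F₂ ∉ 𝓜)
    (hmin : ∀ G₁ ∈ 𝓜, ∀ G₂ ∈ 𝓜, G₁ ∩ G₂ ∉ 𝓜 →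
      modularDefect f F₁ F₂ ≤ modularDefect f G₁ G₂) :
    ∀ F ∈ 𝓜, F₁ ∩ F₂ ⊆ F ∧ modularDefect f F₁ F₂ < f F - f (F₁ ∩ F₂) := by
  obtain ⟨hf0, hfnn, hfmono, hfsub⟩ := hf
  obtain ⟨hflats, hup, hmod⟩ := h𝓜
  set S := F₁ ∩ F₂ with hSdef
  set δ := modularDefect f F₁ F₂ with hδdef
  -- Part (a): every member of 𝓜 contains S
  have hsubS : ∀ F ∈ 𝓜, S ⊆ F := by
    have hNcut : IsModularCut M f {F | F ∈ 𝓜 ∧ S ⊆ F} := by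
      refine ⟨fun F hF => hflats F hF.1, ?_, ?_⟩
      · intro G₁ hG₁ G₂ hG₂flat hss
        exact ⟨hup G₁ hG₁.1 G₂ hG₂flat hss, hG₁.2.trans hss⟩
      · intro G₁ hG₁ G₂ hG₂ hd
        exact ⟨hmod G₁ hG₁.1 G₂ hG₂.1 hd, Finset.subset_inter hG₁.2 hG₂.2⟩
    have := hgen _ hNcut ⟨hF₁mem, Finset.inter_subset_left⟩
      ⟨hF₂mem, Finset.inter_subset_right⟩
    exact fun F hF => (this hF).2
  -- Helper for part (b)
  have key : ∀ F ∈ 𝓜, f F - f S ≤ δ → ∀ G ∈ 𝓜, F ∩ G ∉ 𝓜 → F ⊆ G := by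
    intro F hF hFle G hG hFG
    have hFM : F ⊆ M := (hflats F hF).1
    have hGM : G ⊆ M := (hflats G hG).1
    have hmin' := hmin F hF G hG hFG
    have h1 : f S ≤ f (F ∩ G) :=
      hfmono S (F ∩ G) (Finset.subset_inter (hsubS F hF) (hsubS G hG))
        ((Finset.inter_subset_left).trans hFM)
    have h2 : f G ≤ f (F ∪ G) :=
      hfmono G (F ∪ G) Finset.subset_union_right (Finset.union_subset hFM hGM)
    have heq : f (F ∪ G) = f G := by
      simp only [modularDefect] at hmin'
      linarith
    have hGflat := hflats G hG
    by_contra hns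
    have hlt : G ⊂ F ∪ G := by
      refine Finset.ssubset_iff_subset_ne.mpr ⟨Finset.subset_union_right, ?_⟩
      intro h
      exact hns (fun x hx => by
        have : x ∈ F ∪ G := Finset.mem_union_left _ hx
        rw [← h] at this; exact this)
    exact (ne_of_gt (hGflat.2 (F ∪ G) hlt (Finset.union_subset hFM hGM))) heq
  intro F hF
  refine ⟨hsubS F hF, ?_⟩
  by_contra hle
  push_neg at hle
  have hle : f F - f S ≤ δ := hle
  have hFM : F ⊆ M := (hflats F hF).1
  -- step 1 : F ∩ F₁ ∈ 𝓜
  have hFF₁ : F ∩ F₁ ∈ 𝓜 := by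
    by_contra hn
    have hsub := key F hF hle F₁ hF₁mem hn
    exact hn (by rwa [Finset.inter_eq_left.mpr hsub])
  -- step 2
  have hF'le : f (F ∩ F₁) - f S ≤ δ := by
    have := hfmono (F ∩ F₁) F Finset.inter_subset_left hFM
    linarith
  have hFF₂ : (F ∩ F₁) ∩ F₂ ∈ 𝓜 := by
    by_contra hn
    have hsub := key (F ∩ F₁) hFF₁ hF'le F₂ hF₂mem hn
    exact hn (by rwa [Finset.inter_eq_left.mpr hsub])
  have : (F ∩ F₁) ∩ F₂ = S := by
    rw [Finset.inter_assoc, ← hSdef, Finset.inter_eq_right.mpr (hsubS F hF)]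
  rw [this] at hFF₂
  exact hS hFF₂
end

section
/- Let (f,M) be a polymatroid and F⊆M a flat. Then F contains a unique maximal cyclic flat C⊆F, i.e., a cyclic flat C⊆F that contains every cyclic flat contained in F. Moreover, for this C and every A with C⊆A⊆F, f(A)=f(C)+μ_f(A−C), where μ_f(A−C)=∑_{a∈A−C} f({a}). -/
open scoped Classical

/-- A cyclic flat: a flat `C` such that for every `i ∈ C`, either `f {i} = 0`
or `f C - f (C \ {i}) < f {i}`. -/
def IsCyclicFlat {α : Type*} [DecidableEq α] (M : Finset α) (f : Finset α → ℝ)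
    (C : Finset α) : Prop :=
  IsFlat M f C ∧ ∀ i ∈ C, f {i} = 0 ∨ f C - f (C \ {i}) < f {i}

/-- Every flat `F` of a polymatroid contains a unique maximal
cyclic flat `C` (one containing every cyclic flat contained in `F`), and for every
`A` with `C ⊆ A ⊆ F` we have `f A = f C + μ_f (A \ C)`, where
`μ_f (A \ C) = ∑_{a ∈ A \ C} f {a}`. -/
theorem statement_2 {α : Type*} [DecidableEq α]
    (M : Finset α) (f : Finset α → ℝ) (hf : IsPolymatroid M f)
    (F : Finset α) (hF : IsFlat M f F) :
    ∃! C : Finset α,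
      IsCyclicFlat M f C ∧ C ⊆ F ∧
      (∀ C', IsCyclicFlat M f C' → C' ⊆ F → C' ⊆ C) ∧
      (∀ A, C ⊆ A → A ⊆ F → f A = f C + ∑ a ∈ A \ C, f {a}) := by
  obtain ⟨hf0, hfnn, hfmono, hfsub⟩ := hf
  obtain ⟨hFM, hFflat⟩ := hF
  -- L1: adding a single element increases rank by at most f {a}
  have L1 : ∀ (A : Finset α) (a : α), A ⊆ M → a ∈ M → f (insert a A) ≤ f A + f {a} := by
    intro A a hA ha
    by_cases h : a ∈ A
    · rw [Finset.insert_eq_self.2 h]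
      have := hfnn {a} (Finset.singleton_subset_iff.2 ha)
      linarith
    · have hsm := hfsub A {a} hA (Finset.singleton_subset_iff.2 ha)
      rw [Finset.union_comm, ← Finset.insert_eq,
        Finset.inter_singleton_of_notMem h, hf0] at hsm
      linarith
  -- L2: diminishing returns
  have L2 : ∀ (A B : Finset α) (i : α), i ∈ A → A ⊆ B → B ⊆ M →
      f B - f (B \ {i}) ≤ f A - f (A \ {i}) := by
    intro A B i hiA hAB hBM
    have hu : (B \ {i}) ∪ A = B := by
      ext x
      simp only [Finset.mem_union, Finset.mem_sdiff, Finset.mem_singleton]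
      constructor
      · rintro (⟨h1, _⟩ | h1)
        · exact h1
        · exact hAB h1
      · intro hx
        by_cases hxi : x = i
        · exact Or.inr (hxi ▸ hiA)
        · exact Or.inl ⟨hx, hxi⟩
    have hi : (B \ {i}) ∩ A = A \ {i} := by
      ext x
      simp only [Finset.mem_inter, Finset.mem_sdiff, Finset.mem_singleton]
      constructor
      · rintro ⟨⟨_, h2⟩, h3⟩; exact ⟨h3, h2⟩
      · rintro ⟨h1, h2⟩; exact ⟨⟨hAB h1, h2⟩, h1⟩
    have hsm := hfsub (B \ {i}) A ((Finset.sdiff_subset).trans hBM) (hAB.trans hBM)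
    rw [hu, hi] at hsm
    linarith
  -- L3: marginal bounded by singleton rank
  have L3 : ∀ (A : Finset α) (i : α), i ∈ A → A ⊆ M → f A - f (A \ {i}) ≤ f {i} := by
    intro A i hiA hAM
    have h1 := L1 (A \ {i}) i ((Finset.sdiff_subset).trans hAM) (hAM hiA)
    rw [← Finset.erase_eq, Finset.insert_erase hiA] at h1
    rw [Finset.erase_eq] at h1
    linarith
  -- L4: rank bounded by rank of subset plus singletons
  have L4 : ∀ (B A : Finset α), A ⊆ B → B ⊆ M → f B ≤ f A + ∑ a ∈ B \ A, f {a} := by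
    intro B
    suffices h : ∀ n (A : Finset α), (B \ A).card = n → A ⊆ B → B ⊆ M →
        f B ≤ f A + ∑ a ∈ B \ A, f {a} by
      intro A hAB hBM; exact h _ A rfl hAB hBM
    intro n
    induction n with
    | zero =>
      intro A hc hAB hBM
      have he : B \ A = ∅ := Finset.card_eq_zero.mp hc
      have hBA : B = A := Finset.Subset.antisymm (Finset.sdiff_eq_empty_iff_subset.mp he) hAB
      rw [hBA, Finset.sdiff_self, Finset.sum_empty]
      linarith
    | succ n ih =>
      intro A hc hAB hBM
      obtain ⟨a, ha⟩ : (B \ A).Nonempty := by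
        rw [← Finset.card_pos, hc]; omega
      have haB := (Finset.mem_sdiff.mp ha).1
      have haA := (Finset.mem_sdiff.mp ha).2
      have hsub : insert a A ⊆ B := Finset.insert_subset haB hAB
      have hsd : B \ insert a A = (B \ A).erase a := by
        ext x
        simp only [Finset.mem_sdiff, Finset.mem_insert, Finset.mem_erase]
        tauto
      have hcard : (B \ insert a A).card = n := by
        rw [hsd, Finset.card_erase_of_mem ha, hc]; omega
      have h1 := ih (insert a A) hcard hsub hBM
      have h2 := L1 A a ((hAB).trans hBM) (hBM haB)
      have hsum : ∑ x ∈ B \ A, f {x} = f {a} + ∑ x ∈ (B \ A).erase a, f {x} :=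
        (Finset.add_sum_erase _ _ ha).symm
      rw [hsd] at h1
      rw [hsum]
      linarith
  -- The candidate maximal cyclic flat
  set C : Finset α := F.filter (fun i => f {i} = 0 ∨ f F - f (F \ {i}) < f {i}) with hCdef
  have hCF : C ⊆ F := Finset.filter_subset _ _
  have hCM : C ⊆ M := hCF.trans hFM
  -- elements of F outside C are free
  have hfree : ∀ a ∈ F, a ∉ C → f F - f (F \ {a}) = f {a} ∧ 0 < f {a} := by
    intro a haF haC
    have h1 : ¬ (f {a} = 0 ∨ f F - f (F \ {a}) < f {a}) := by
      intro h; exact haC (Finset.mem_filter.mpr ⟨haF, h⟩)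
    push_neg at h1
    have h3 := L3 F a haF hFM
    have h4 := hfnn {a} (Finset.singleton_subset_iff.2 (hFM haF))
    exact ⟨le_antisymm h3 h1.2, lt_of_le_of_ne h4 (Ne.symm h1.1)⟩
  -- removing a free element from a subset of F
  have hstep : ∀ (A : Finset α) (a : α), a ∈ A → A ⊆ F → a ∉ C →
      f A = f (A \ {a}) + f {a} := by
    intro A a haA hAF haC
    obtain ⟨heq, _⟩ := hfree a (hAF haA) haC
    have h1 := L2 A F a haA hAF hFM
    have h2 := L3 A a haA (hAF.trans hFM)
    linarith
  -- the rank formula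
  have hformula : ∀ A, C ⊆ A → A ⊆ F → f A = f C + ∑ a ∈ A \ C, f {a} := by
    suffices h : ∀ n (A : Finset α), (A \ C).card = n → C ⊆ A → A ⊆ F →
        f A = f C + ∑ a ∈ A \ C, f {a} by
      intro A hCA hAF; exact h _ A rfl hCA hAF
    intro n
    induction n with
    | zero =>
      intro A hc hCA hAF
      have he : A \ C = ∅ := Finset.card_eq_zero.mp hc
      have hAC : A = C := Finset.Subset.antisymm (Finset.sdiff_eq_empty_iff_subset.mp he) hCA
      rw [hAC, Finset.sdiff_self, Finset.sum_empty]
      ring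
    | succ n ih =>
      intro A hc hCA hAF
      obtain ⟨a, ha⟩ : (A \ C).Nonempty := by
        rw [← Finset.card_pos, hc]; omega
      have haA := (Finset.mem_sdiff.mp ha).1
      have haC := (Finset.mem_sdiff.mp ha).2
      have hCA' : C ⊆ A \ {a} := by
        intro x hx
        exact Finset.mem_sdiff.mpr ⟨hCA hx, by
          simp only [Finset.mem_singleton]
          rintro rfl; exact haC hx⟩
      have hA'F : A \ {a} ⊆ F := (Finset.sdiff_subset).trans hAF
      have hsd : (A \ {a}) \ C = (A \ C).erase a := by
        ext x
        simp only [Finset.mem_sdiff, Finset.mem_singleton, Finset.mem_erase]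
        tauto
      have hcard : ((A \ {a}) \ C).card = n := by
        rw [hsd, Finset.card_erase_of_mem ha, hc]; omega
      have h1 := ih (A \ {a}) hcard hCA' hA'F
      have h2 := hstep A a haA hAF haC
      have hsum : ∑ x ∈ A \ C, f {x} = f {a} + ∑ x ∈ (A \ C).erase a, f {x} :=
        (Finset.add_sum_erase _ _ ha).symm
      rw [hsd] at h1
      rw [hsum]
      linarith
  -- C is a flat
  have hCflat : IsFlat M f C := by
    refine ⟨hCM, ?_⟩
    intro G hCG hGM
    obtain ⟨g, hgG, hgC⟩ := Finset.exists_of_ssubset hCG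
    have hCsubG := hCG.subset
    have hinsG : insert g C ⊆ G := Finset.insert_subset hgG hCsubG
    have hmono := hfmono (insert g C) G hinsG hGM
    by_cases hgF : g ∈ F
    · have h1 := hstep (insert g C) g (Finset.mem_insert_self g C)
        (Finset.insert_subset hgF hCF) hgC
      rw [← Finset.erase_eq, Finset.erase_insert hgC] at h1
      obtain ⟨_, hpos⟩ := hfree g hgF hgC
      linarith
    · have hFss : F ⊂ insert g F := Finset.ssubset_insert hgF
      have hflt := hFflat (insert g F) hFss (Finset.insert_subset (hGM hgG) hFM)
      have h2 := L2 (insert g C) (insert g F) g (Finset.mem_insert_self g C)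
        (Finset.insert_subset_insert g hCF) (Finset.insert_subset (hGM hgG) hFM)
      rw [← Finset.erase_eq, ← Finset.erase_eq, Finset.erase_insert hgC,
        Finset.erase_insert hgF] at h2
      linarith
  -- C is cyclic
  have hCcyc : IsCyclicFlat M f C := by
    refine ⟨hCflat, ?_⟩
    intro i hi
    have hmem := Finset.mem_filter.mp hi
    rcases hmem.2 with h0 | hlt
    · exact Or.inl h0
    · right
      have hS : f F = f C + ∑ a ∈ F \ C, f {a} := hformula F hCF (le_refl F)
      have hL4 := L4 (F \ {i}) (C \ {i})
        (Finset.sdiff_subset_sdiff hCF (le_refl _)) ((Finset.sdiff_subset).trans hFM)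
      have hsd : (F \ {i}) \ (C \ {i}) = F \ C := by
        ext x
        simp only [Finset.mem_sdiff, Finset.mem_singleton, not_and, not_not]
        constructor
        · rintro ⟨⟨hxF, hxi⟩, h2⟩
          exact ⟨hxF, fun hxC => hxi (h2 hxC)⟩
        · rintro ⟨hxF, hxC⟩
          have hxi : x ≠ i := by rintro rfl; exact hxC hi
          exact ⟨⟨hxF, hxi⟩, fun hxC' => absurd hxC' hxC⟩
      rw [hsd] at hL4
      linarith
  -- maximality
  have hmax : ∀ C', IsCyclicFlat M f C' → C' ⊆ F → C' ⊆ C := by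
    intro C' ⟨hC'flat, hC'cyc⟩ hC'F i hiC'
    refine Finset.mem_filter.mpr ⟨hC'F hiC', ?_⟩
    rcases hC'cyc i hiC' with h0 | hlt
    · exact Or.inl h0
    · right
      have h2 := L2 C' F i hiC' hC'F hFM
      linarith
  refine ⟨C, ⟨hCcyc, hCF, hmax, hformula⟩, ?_⟩
  intro y ⟨hy1, hy2, hy3, _⟩
  exact Finset.Subset.antisymm (hmax y hy1 hy2) (hy3 C hCcyc hCF)
end

section
/- Let (f,M) be a polymatroid. The cyclic flats of (f,M) form a lattice under inclusion: for any two cyclic flats C1,C2, the closure cl(C1∪C2) is a cyclic flat and is the smallest cyclic flat containing both C1 and C2, and there is a largest cyclic flat contained in C1∩C2 (namely the unique maximal cyclic flat inside the flat C1∩C2), which is the greatest lower bound of C1 and C2 among cyclic flats. -/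
open scoped Classical

section Aux
variable {α : Type*} [DecidableEq α] {M : Finset α} {f : Finset α → ℝ}

/-- Adding to a subset of a flat an element of `M` outside the flat strictly increases `f`. -/
lemma aux_insert_lt (hf : IsPolymatroid M f) {F A : Finset α} (hF : IsFlat M f F)
    (hAF : A ⊆ F) {x : α} (hxM : x ∈ M) (hxF : x ∉ F) :
    f A < f (insert x A) := by
  obtain ⟨h0, hnn, hmono, hsub⟩ := hf
  have hFM := hF.1
  have hins : insert x F ⊆ M := Finset.insert_subset hxM hFM
  have h1 : f F < f (insert x F) := hF.2 _ (Finset.ssubset_insert hxF) hins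
  have h2 := hsub (insert x A) F (Finset.insert_subset hxM (hAF.trans hFM)) hFM
  have hu : insert x A ∪ F = insert x F := by
    rw [Finset.insert_union, Finset.union_eq_right.mpr hAF]
  have hi : insert x A ∩ F = A := by
    ext a; simp only [Finset.mem_inter, Finset.mem_insert]
    constructor
    · rintro ⟨rfl | ha, haF⟩
      · exact absurd haF hxF
      · exact ha
    · intro ha; exact ⟨Or.inr ha, hAF ha⟩
  rw [hu, hi] at h2
  linarith

lemma flat_inter (hf : IsPolymatroid M f) {F₁ F₂ : Finset α}
    (h1 : IsFlat M f F₁) (h2 : IsFlat M f F₂) : IsFlat M f (F₁ ∩ F₂) := by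
  refine ⟨(Finset.inter_subset_left).trans h1.1, fun G hG hGM => ?_⟩
  obtain ⟨x, hxG, hxI⟩ := Finset.exists_of_ssubset hG
  have hxM : x ∈ M := hGM hxG
  have hx : x ∉ F₁ ∨ x ∉ F₂ := by
    by_contra h; push_neg at h; exact hxI (Finset.mem_inter.mpr ⟨h.1, h.2⟩)
  have key : f (F₁ ∩ F₂) < f (insert x (F₁ ∩ F₂)) := by
    rcases hx with hx | hx
    · exact aux_insert_lt hf h1 Finset.inter_subset_left hxM hx
    · exact aux_insert_lt hf h2 Finset.inter_subset_right hxM hx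
  have : f (insert x (F₁ ∩ F₂)) ≤ f G :=
    hf.2.2.1 _ _ (Finset.insert_subset hxG hG.subset) hGM
  linarith

/-- Closure of a set: add all elements of `M` that don't increase the rank. -/
noncomputable def clo (M : Finset α) (f : Finset α → ℝ) (A : Finset α) : Finset α :=
  A ∪ M.filter (fun x => f (insert x A) = f A)

lemma subset_clo (A : Finset α) : A ⊆ clo M f A := Finset.subset_union_left

lemma clo_subset_M {A : Finset α} (hA : A ⊆ M) : clo M f A ⊆ M :=
  Finset.union_subset hA (Finset.filter_subset _ _)

lemma f_clo (hf : IsPolymatroid M f) {A : Finset α} (hA : A ⊆ M) :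
    f (clo M f A) = f A := by
  obtain ⟨h0, hnn, hmono, hsub⟩ := hf
  suffices h : ∀ S : Finset α, S ⊆ M.filter (fun x => f (insert x A) = f A) → f (A ∪ S) = f A by
    exact h _ (le_refl _)
  intro S
  induction S using Finset.induction_on with
  | empty => simp
  | @insert x S hxS ih =>
    intro hsub'
    have hxmem := hsub' (Finset.mem_insert_self x S)
    rw [Finset.mem_filter] at hxmem
    have hS : S ⊆ M.filter (fun x => f (insert x A) = f A) :=
      (Finset.subset_insert x S).trans hsub'
    have hAS : f (A ∪ S) = f A := ih hS
    by_cases hx : x ∈ A ∪ S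
    · rw [Finset.union_insert, Finset.insert_eq_self.mpr hx, hAS]
    · have hASM : A ∪ S ⊆ M :=
        Finset.union_subset hA ((hS.trans (Finset.filter_subset _ _)))
      have h2 := hsub (A ∪ S) (insert x A) hASM
        (Finset.insert_subset hxmem.1 hA)
      have hu : (A ∪ S) ∪ insert x A = insert x (A ∪ S) := by
        ext a
        simp only [Finset.mem_union, Finset.mem_insert]
        tauto
      have hi : (A ∪ S) ∩ insert x A = A := by
        ext a
        simp only [Finset.mem_inter, Finset.mem_insert]
        constructor
        · rintro ⟨ha, rfl | haA⟩
          · exact absurd ha hx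
          · exact haA
        · intro ha
          exact ⟨Finset.mem_union_left _ ha, Or.inr ha⟩
      rw [hu, hi] at h2
      have hge : f A ≤ f (insert x (A ∪ S)) :=
        hmono A _ (Finset.subset_union_left.trans (Finset.subset_insert _ _))
          (Finset.insert_subset hxmem.1 hASM)
      rw [Finset.union_insert]
      rw [hAS, hxmem.2] at h2
      linarith

end Aux

section Aux2
variable {α : Type*} [DecidableEq α] {M : Finset α} {f : Finset α → ℝ}

lemma clo_flat (hf : IsPolymatroid M f) {A : Finset α} (hA : A ⊆ M) :
    IsFlat M f (clo M f A) := by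
  refine ⟨clo_subset_M hA, fun G hG hGM => ?_⟩
  obtain ⟨x, hxG, hxC⟩ := Finset.exists_of_ssubset hG
  have hxM : x ∈ M := hGM hxG
  have hne : f (insert x A) ≠ f A := by
    intro h
    exact hxC (Finset.mem_union_right _ (Finset.mem_filter.mpr ⟨hxM, h⟩))
  have hxA : x ∉ A := fun h => hxC (subset_clo A h)
  have hle : f A ≤ f (insert x A) :=
    hf.2.2.1 A _ (Finset.subset_insert _ _) (Finset.insert_subset hxM hA)
  have hlt : f A < f (insert x A) := lt_of_le_of_ne hle (Ne.symm hne)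
  have h2 : f (insert x A) ≤ f G := by
    refine hf.2.2.1 _ _ (Finset.insert_subset hxG ?_) hGM
    exact (subset_clo A).trans hG.subset
  rw [f_clo hf hA]
  linarith

lemma clo_min (hf : IsPolymatroid M f) {A F : Finset α} (hA : A ⊆ M)
    (hF : IsFlat M f F) (hAF : A ⊆ F) : clo M f A ⊆ F := by
  intro x hx
  rcases Finset.mem_union.mp hx with hxA | hxfil
  · exact hAF hxA
  · obtain ⟨hxM, hfx⟩ := Finset.mem_filter.mp hxfil
    by_contra hxF
    exact absurd hfx (ne_of_gt (aux_insert_lt hf hF hAF hxM hxF))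

/-- Cyclicity criterion: a flat `D` with the same rank as a subset `U` whose
elements are each covered by a "cyclic witness" inside `U` is a cyclic flat. -/
lemma cyclic_of (hf : IsPolymatroid M f) {D U : Finset α} (hD : IsFlat M f D)
    (hU : U ⊆ D) (hfU : f D = f U)
    (hcyc : ∀ i ∈ U, f {i} = 0 ∨ ∃ C, C ⊆ U ∧ i ∈ C ∧ f C - f (C \ {i}) < f {i}) :
    IsCyclicFlat M f D := by
  obtain ⟨h0, hnn, hmono, hsub⟩ := hf
  refine ⟨hD, fun i hiD => ?_⟩
  by_cases hfi : f {i} = 0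
  · exact Or.inl hfi
  right
  have hiM : i ∈ M := hD.1 hiD
  have hfipos : 0 < f {i} :=
    lt_of_le_of_ne (hnn _ (Finset.singleton_subset_iff.mpr hiM)) (Ne.symm hfi)
  by_cases hiU : i ∈ U
  · obtain hf0 | ⟨C, hCU, hiC, hC⟩ := hcyc i hiU
    · exact absurd hf0 hfi
    have hCD : C ⊆ D := hCU.trans hU
    have h2 := hsub C (D \ {i}) (hCD.trans hD.1) ((Finset.sdiff_subset).trans hD.1)
    have hu : C ∪ (D \ {i}) = D := by
      ext a
      simp only [Finset.mem_union, Finset.mem_sdiff, Finset.mem_singleton]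
      constructor
      · rintro (h | h)
        · exact hCD h
        · exact h.1
      · intro h
        by_cases hai : a = i
        · exact Or.inl (hai ▸ hiC)
        · exact Or.inr ⟨h, hai⟩
    have hi : C ∩ (D \ {i}) = C \ {i} := by
      ext a
      simp only [Finset.mem_inter, Finset.mem_sdiff, Finset.mem_singleton]
      exact ⟨fun h => ⟨h.1, h.2.2⟩, fun h => ⟨h.1, hCD h.1, h.2⟩⟩
    rw [hu, hi] at h2
    linarith
  · have hUD : U ⊆ D \ {i} := by
      intro a ha
      exact Finset.mem_sdiff.mpr ⟨hU ha, fun h => hiU (Finset.mem_singleton.mp h ▸ ha)⟩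
    have : f U ≤ f (D \ {i}) := hmono _ _ hUD ((Finset.sdiff_subset).trans hD.1)
    linarith

end Aux2

/-- Cyclic flats form a lattice under inclusion: for cyclic flats
`C₁, C₂`, the closure `D = cl(C₁ ∪ C₂)` (the smallest flat containing `C₁ ∪ C₂`) is
a cyclic flat and is the smallest cyclic flat containing both; moreover there is a
largest cyclic flat contained in `C₁ ∩ C₂`, which is the greatest lower bound of
`C₁` and `C₂` among cyclic flats. -/
theorem statement_3 {α : Type*} [DecidableEq α]
    (M : Finset α) (f : Finset α → ℝ) (hf : IsPolymatroid M f)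
    (C₁ C₂ : Finset α) (h₁ : IsCyclicFlat M f C₁) (h₂ : IsCyclicFlat M f C₂)
    (D : Finset α) (hDflat : IsFlat M f D) (hDsup : C₁ ∪ C₂ ⊆ D)
    (hDmin : ∀ G, IsFlat M f G → C₁ ∪ C₂ ⊆ G → D ⊆ G) :
    (IsCyclicFlat M f D ∧
      ∀ C', IsCyclicFlat M f C' → C₁ ⊆ C' → C₂ ⊆ C' → D ⊆ C') ∧
    (∃ E, IsCyclicFlat M f E ∧ E ⊆ C₁ ∩ C₂ ∧
      ∀ C', IsCyclicFlat M f C' → C' ⊆ C₁ → C' ⊆ C₂ → C' ⊆ E) := by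
  have hUM : C₁ ∪ C₂ ⊆ M := Finset.union_subset h₁.1.1 h₂.1.1
  constructor
  · -- join part
    constructor
    · -- D is a cyclic flat
      have hDclo : D ⊆ clo M f (C₁ ∪ C₂) :=
        hDmin _ (clo_flat hf hUM) (subset_clo _)
      have hfD : f D = f (C₁ ∪ C₂) := by
        have h1 : f D ≤ f (clo M f (C₁ ∪ C₂)) :=
          hf.2.2.1 _ _ hDclo (clo_subset_M hUM)
        have h2 : f (C₁ ∪ C₂) ≤ f D := hf.2.2.1 _ _ hDsup hDflat.1
        rw [f_clo hf hUM] at h1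
        linarith
      refine cyclic_of hf hDflat hDsup hfD (fun i hi => ?_)
      rcases Finset.mem_union.mp hi with hi1 | hi1
      · rcases h₁.2 i hi1 with h | h
        · exact Or.inl h
        · exact Or.inr ⟨C₁, Finset.subset_union_left, hi1, h⟩
      · rcases h₂.2 i hi1 with h | h
        · exact Or.inl h
        · exact Or.inr ⟨C₂, Finset.subset_union_right, hi1, h⟩
    · exact fun C' hC' hc1 hc2 => hDmin C' hC'.1 (Finset.union_subset hc1 hc2)
  · -- meet part
    set T := C₁ ∩ C₂ with hT
    have hTflat : IsFlat M f T := flat_inter hf h₁.1 h₂.1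
    set U := T.filter (fun x => ∃ C, IsCyclicFlat M f C ∧ C ⊆ T ∧ x ∈ C) with hUdef
    have hUT : U ⊆ T := Finset.filter_subset _ _
    have hUM' : U ⊆ M := hUT.trans hTflat.1
    have hsubU : ∀ C, IsCyclicFlat M f C → C ⊆ T → C ⊆ U := by
      intro C hC hCT x hx
      exact Finset.mem_filter.mpr ⟨hCT hx, C, hC, hCT, hx⟩
    refine ⟨clo M f U, ?_, ?_, ?_⟩
    · refine cyclic_of hf (clo_flat hf hUM') (subset_clo _) (f_clo hf hUM')
        (fun i hi => ?_)
      obtain ⟨hiT, C, hC, hCT, hiC⟩ := Finset.mem_filter.mp hi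
      rcases hC.2 i hiC with h | h
      · exact Or.inl h
      · exact Or.inr ⟨C, hsubU C hC hCT, hiC, h⟩
    · exact clo_min hf hUM' hTflat hUT
    · intro C' hC' hc1 hc2
      exact (hsubU C' hC' (Finset.subset_inter hc1 hc2)).trans (subset_clo _)
end

section
/- Let (r,L) be a ranked lattice on a finite set M and μ a measure on M. Suppose that for every pair of incomparable elements Z1,Z2∈L, r(Z1)+r(Z2) ≥ r(Z1∧Z2)+r(Z1∨Z2)+μ((Z1∩Z2)−(Z1∧Z2)). Then the convolution r'=r*μ is a polymatroid rank function on M: r' is nonnegative, monotone (A⊆B implies r'(A)≤r'(B)) and submodular (r'(A∪B)+r'(A∩B)≤r'(A)+r'(B) for all A,B⊆M). -/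
/-- Helper: a covering inequality for sums of a nonnegative function. -/
lemma sum_cover_ineq {α : Type*} [DecidableEq α] (M S1 S2 T1 T2 T3 : Finset α)
    (hS1 : S1 ⊆ M) (hS2 : S2 ⊆ M) (f : α → ℝ) (hf : ∀ a ∈ M, 0 ≤ f a)
    (h1 : ∀ a ∈ M, a ∈ S1 → a ∈ S2 →
      (a ∈ T1 ∧ a ∈ T2) ∨ (a ∈ T1 ∧ a ∈ T3) ∨ (a ∈ T2 ∧ a ∈ T3))
    (h2 : ∀ a ∈ M, a ∈ S1 → a ∈ T1 ∨ a ∈ T2 ∨ a ∈ T3)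
    (h3 : ∀ a ∈ M, a ∈ S2 → a ∈ T1 ∨ a ∈ T2 ∨ a ∈ T3)
    (hT1 : T1 ⊆ M) (hT2 : T2 ⊆ M) (hT3 : T3 ⊆ M) :
    ∑ a ∈ S1, f a + ∑ a ∈ S2, f a ≤
      ∑ a ∈ T1, f a + ∑ a ∈ T2, f a + ∑ a ∈ T3, f a := by
  have key : ∀ S : Finset α, S ⊆ M → ∑ a ∈ S, f a = ∑ a ∈ M, if a ∈ S then f a else 0 := by
    intro S hS
    rw [Finset.sum_ite_mem, Finset.inter_eq_right.mpr hS]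
  rw [key S1 hS1, key S2 hS2, key T1 hT1, key T2 hT2, key T3 hT3,
    ← Finset.sum_add_distrib, ← Finset.sum_add_distrib, ← Finset.sum_add_distrib]
  apply Finset.sum_le_sum
  intro a ha
  have hfa := hf a ha
  have H1 := h1 a ha
  have H2 := h2 a ha
  have H3 := h3 a ha
  split_ifs <;> first | linarith | (exfalso; tauto)

/-- Let `(r, L)` be a ranked lattice on the finite set `M` (a
nonempty family of subsets of `M` in which every pair has a greatest lower bound
`meet` and a least upper bound `join` with respect to inclusion, with a nonnegative
rank function `r`), and let `μ` be a measure on `M`.  If for every pair of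
incomparable `Z₁, Z₂ ∈ L` we have
`r Z₁ + r Z₂ ≥ r (Z₁ ∧ Z₂) + r (Z₁ ∨ Z₂) + μ ((Z₁ ∩ Z₂) \ (Z₁ ∧ Z₂))`,
then the convolution `r' = r * μ`, `r' A = min { r Z + μ (A \ Z) : Z ∈ L }`,
is a polymatroid rank function on `M`: nonnegative, monotone and submodular. -/
theorem statement_5 {α : Type*} [DecidableEq α]
    (M : Finset α) (L : Finset (Finset α)) (hLne : L.Nonempty)
    (hLsub : ∀ Z ∈ L, Z ⊆ M)
    (meet join : Finset α → Finset α → Finset α)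
    (hmeet : ∀ Z₁ ∈ L, ∀ Z₂ ∈ L, meet Z₁ Z₂ ∈ L ∧ meet Z₁ Z₂ ⊆ Z₁ ∧ meet Z₁ Z₂ ⊆ Z₂ ∧
      ∀ W ∈ L, W ⊆ Z₁ → W ⊆ Z₂ → W ⊆ meet Z₁ Z₂)
    (hjoin : ∀ Z₁ ∈ L, ∀ Z₂ ∈ L, join Z₁ Z₂ ∈ L ∧ Z₁ ⊆ join Z₁ Z₂ ∧ Z₂ ⊆ join Z₁ Z₂ ∧
      ∀ W ∈ L, Z₁ ⊆ W → Z₂ ⊆ W → join Z₁ Z₂ ⊆ W)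
    (r : Finset α → ℝ) (hr : ∀ Z ∈ L, 0 ≤ r Z)
    (μ : Finset α → ℝ)
    (hμnn : ∀ A, A ⊆ M → 0 ≤ μ A)
    (hμadd : ∀ A, A ⊆ M → μ A = ∑ a ∈ A, μ {a})
    (hcond : ∀ Z₁ ∈ L, ∀ Z₂ ∈ L, ¬ Z₁ ⊆ Z₂ → ¬ Z₂ ⊆ Z₁ →
      r (meet Z₁ Z₂) + r (join Z₁ Z₂) + μ ((Z₁ ∩ Z₂) \ meet Z₁ Z₂) ≤ r Z₁ + r Z₂)
    (r' : Finset α → ℝ)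
    (hr' : ∀ A, r' A = L.inf' hLne (fun Z => r Z + μ (A \ Z))) :
    (∀ A, A ⊆ M → 0 ≤ r' A) ∧
    (∀ A B, A ⊆ B → B ⊆ M → r' A ≤ r' B) ∧
    (∀ A B, A ⊆ M → B ⊆ M → r' (A ∪ B) + r' (A ∩ B) ≤ r' A + r' B) := by
  have hmin : ∀ A : Finset α, ∃ Z ∈ L, r' A = r Z + μ (A \ Z) := by
    intro A
    obtain ⟨Z, hZ, hE⟩ := Finset.exists_mem_eq_inf' hLne (fun Z => r Z + μ (A \ Z))
    exact ⟨Z, hZ, (hr' A).trans hE⟩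
  have hle : ∀ A : Finset α, ∀ Z ∈ L, r' A ≤ r Z + μ (A \ Z) := by
    intro A Z hZ
    rw [hr']
    exact Finset.inf'_le _ hZ
  have hfnn : ∀ a ∈ M, 0 ≤ μ {a} := by
    intro a ha
    exact hμnn {a} (Finset.singleton_subset_iff.mpr ha)
  have hμmono : ∀ S T : Finset α, S ⊆ T → T ⊆ M → μ S ≤ μ T := by
    intro S T hST hTM
    rw [hμadd S (hST.trans hTM), hμadd T hTM]
    exact Finset.sum_le_sum_of_subset_of_nonneg hST
      (fun a ha _ => hfnn a (hTM ha))
  refine ⟨?_, ?_, ?_⟩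
  · intro A hA
    obtain ⟨Z, hZ, hE⟩ := hmin A
    rw [hE]
    have h1 := hμnn (A \ Z) ((Finset.sdiff_subset).trans hA)
    have h2 := hr Z hZ
    linarith
  · intro A B hAB hBM
    obtain ⟨Z, hZ, hE⟩ := hmin B
    rw [hE]
    have h1 := hle A Z hZ
    have h2 := hμmono (A \ Z) (B \ Z)
      (Finset.sdiff_subset_sdiff hAB (subset_refl Z)) ((Finset.sdiff_subset).trans hBM)
    linarith
  · intro A B hA hB
    obtain ⟨Z₁, hZ₁, hE₁⟩ := hmin A
    obtain ⟨Z₂, hZ₂, hE₂⟩ := hmin B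
    have hABM : A ∪ B ⊆ M := Finset.union_subset hA hB
    have hIM : A ∩ B ⊆ M := (Finset.inter_subset_left).trans hA
    by_cases h12 : Z₁ ⊆ Z₂
    · -- use Z₂ for A ∪ B and Z₁ for A ∩ B
      have hU := hle (A ∪ B) Z₂ hZ₂
      have hI := hle (A ∩ B) Z₁ hZ₁
      have key := sum_cover_ineq M ((A ∪ B) \ Z₂) ((A ∩ B) \ Z₁) (A \ Z₁) (B \ Z₂) ∅
        ((Finset.sdiff_subset).trans hABM) ((Finset.sdiff_subset).trans hIM)
        (fun a => μ {a}) hfnn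
        (by
          intro a _ ha hb
          simp only [Finset.mem_sdiff, Finset.mem_union, Finset.mem_inter,
            Finset.notMem_empty] at ha hb ⊢
          have p1 : a ∈ Z₁ → a ∈ Z₂ := fun h => h12 h
          tauto)
        (by
          intro a _ ha
          simp only [Finset.mem_sdiff, Finset.mem_union, Finset.notMem_empty] at ha ⊢
          have p1 : a ∈ Z₁ → a ∈ Z₂ := fun h => h12 h
          tauto)
        (by
          intro a _ ha
          simp only [Finset.mem_sdiff, Finset.mem_inter, Finset.notMem_empty] at ha ⊢
          tauto)
        ((Finset.sdiff_subset).trans hA) ((Finset.sdiff_subset).trans hB)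
        (Finset.empty_subset M)
      have e1 := hμadd ((A ∪ B) \ Z₂) ((Finset.sdiff_subset).trans hABM)
      have e2 := hμadd ((A ∩ B) \ Z₁) ((Finset.sdiff_subset).trans hIM)
      have e3 := hμadd (A \ Z₁) ((Finset.sdiff_subset).trans hA)
      have e4 := hμadd (B \ Z₂) ((Finset.sdiff_subset).trans hB)
      have e5 : ∑ a ∈ (∅ : Finset α), μ {a} = 0 := Finset.sum_empty
      rw [hE₁, hE₂]
      linarith
    · by_cases h21 : Z₂ ⊆ Z₁
      · -- use Z₁ for A ∪ B and Z₂ for A ∩ B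
        have hU := hle (A ∪ B) Z₁ hZ₁
        have hI := hle (A ∩ B) Z₂ hZ₂
        have key := sum_cover_ineq M ((A ∪ B) \ Z₁) ((A ∩ B) \ Z₂) (A \ Z₁) (B \ Z₂) ∅
          ((Finset.sdiff_subset).trans hABM) ((Finset.sdiff_subset).trans hIM)
          (fun a => μ {a}) hfnn
          (by
            intro a _ ha hb
            simp only [Finset.mem_sdiff, Finset.mem_union, Finset.mem_inter,
              Finset.notMem_empty] at ha hb ⊢
            have p1 : a ∈ Z₂ → a ∈ Z₁ := fun h => h21 h
            tauto)
          (by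
            intro a _ ha
            simp only [Finset.mem_sdiff, Finset.mem_union, Finset.notMem_empty] at ha ⊢
            have p1 : a ∈ Z₂ → a ∈ Z₁ := fun h => h21 h
            tauto)
          (by
            intro a _ ha
            simp only [Finset.mem_sdiff, Finset.mem_inter, Finset.notMem_empty] at ha ⊢
            tauto)
          ((Finset.sdiff_subset).trans hA) ((Finset.sdiff_subset).trans hB)
          (Finset.empty_subset M)
        have e1 := hμadd ((A ∪ B) \ Z₁) ((Finset.sdiff_subset).trans hABM)
        have e2 := hμadd ((A ∩ B) \ Z₂) ((Finset.sdiff_subset).trans hIM)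
        have e3 := hμadd (A \ Z₁) ((Finset.sdiff_subset).trans hA)
        have e4 := hμadd (B \ Z₂) ((Finset.sdiff_subset).trans hB)
        have e5 : ∑ a ∈ (∅ : Finset α), μ {a} = 0 := Finset.sum_empty
        rw [hE₁, hE₂]
        linarith
      · -- incomparable case
        obtain ⟨hmL, hm1, hm2, -⟩ := hmeet Z₁ hZ₁ Z₂ hZ₂
        obtain ⟨hjL, hj1, hj2, -⟩ := hjoin Z₁ hZ₁ Z₂ hZ₂
        have hU := hle (A ∪ B) (join Z₁ Z₂) hjL
        have hI := hle (A ∩ B) (meet Z₁ Z₂) hmL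
        have hc := hcond Z₁ hZ₁ Z₂ hZ₂ h12 h21
        have hT3M : (Z₁ ∩ Z₂) \ meet Z₁ Z₂ ⊆ M :=
          (Finset.sdiff_subset).trans ((Finset.inter_subset_left).trans (hLsub Z₁ hZ₁))
        have key := sum_cover_ineq M ((A ∪ B) \ join Z₁ Z₂) ((A ∩ B) \ meet Z₁ Z₂)
          (A \ Z₁) (B \ Z₂) ((Z₁ ∩ Z₂) \ meet Z₁ Z₂)
          ((Finset.sdiff_subset).trans hABM) ((Finset.sdiff_subset).trans hIM)
          (fun a => μ {a}) hfnn
          (by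
            intro a _ ha hb
            simp only [Finset.mem_sdiff, Finset.mem_union, Finset.mem_inter] at ha hb ⊢
            have p1 : a ∈ Z₁ → a ∈ join Z₁ Z₂ := fun h => hj1 h
            have p2 : a ∈ Z₂ → a ∈ join Z₁ Z₂ := fun h => hj2 h
            tauto)
          (by
            intro a _ ha
            simp only [Finset.mem_sdiff, Finset.mem_union, Finset.mem_inter] at ha ⊢
            have p1 : a ∈ Z₁ → a ∈ join Z₁ Z₂ := fun h => hj1 h
            have p2 : a ∈ Z₂ → a ∈ join Z₁ Z₂ := fun h => hj2 h
            tauto)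
          (by
            intro a _ ha
            simp only [Finset.mem_sdiff, Finset.mem_union, Finset.mem_inter] at ha ⊢
            tauto)
          ((Finset.sdiff_subset).trans hA) ((Finset.sdiff_subset).trans hB) hT3M
        have e1 := hμadd ((A ∪ B) \ join Z₁ Z₂) ((Finset.sdiff_subset).trans hABM)
        have e2 := hμadd ((A ∩ B) \ meet Z₁ Z₂) ((Finset.sdiff_subset).trans hIM)
        have e3 := hμadd (A \ Z₁) ((Finset.sdiff_subset).trans hA)
        have e4 := hμadd (B \ Z₂) ((Finset.sdiff_subset).trans hB)
        have e5 := hμadd ((Z₁ ∩ Z₂) \ meet Z₁ Z₂) hT3M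
        rw [hE₁, hE₂]
        linarith
end

section
/- Let (r,L) be a ranked lattice on a finite set M and μ a measure on M. Assume: (i) for all Z1,Z2∈L with Z1⊊Z2, 0 ≤ r(Z2)−r(Z1) ≤ μ(Z2−Z1); and (ii) for every pair of incomparable Z1,Z2∈L, r(Z1)+r(Z2) ≥ r(Z1∧Z2)+r(Z1∨Z2)+μ((Z1∩Z2)−(Z1∧Z2)). Then r'=r*μ is nonnegative, monotone and submodular on subsets of M, and r'(A)=r(A) for every A∈L. -/
lemma count_aux {α : Type*} [DecidableEq α] (A B Z₁ Z₂ W J : Finset α) (x : α)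
    (c : ℝ) (hc : 0 ≤ c) (h1J : Z₁ ⊆ J) (h2J : Z₂ ⊆ J) :
    (if x ∈ (A ∪ B) \ J then c else 0) + (if x ∈ (A ∩ B) \ W then c else 0) ≤
    (if x ∈ A \ Z₁ then c else 0) + (if x ∈ B \ Z₂ then c else 0) +
      (if x ∈ (Z₁ ∩ Z₂) \ W then c else 0) := by
  have hx1 : x ∈ Z₁ → x ∈ J := @h1J x
  have hx2 : x ∈ Z₂ → x ∈ J := @h2J x
  simp only [Finset.mem_sdiff, Finset.mem_union, Finset.mem_inter]
  split_ifs <;> first | linarith | (exfalso; tauto)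


/-- Let `(r, L)` be a ranked lattice on the finite set `M` and `μ`
a measure on `M`.  Assume (i) for `Z₁ ⊊ Z₂` in `L`, `0 ≤ r Z₂ - r Z₁ ≤ μ (Z₂ \ Z₁)`,
and (ii) for every incomparable pair `Z₁, Z₂ ∈ L`,
`r Z₁ + r Z₂ ≥ r (Z₁ ∧ Z₂) + r (Z₁ ∨ Z₂) + μ ((Z₁ ∩ Z₂) \ (Z₁ ∧ Z₂))`.
Then the convolution `r' = r * μ` is nonnegative, monotone and submodular on
subsets of `M`, and `r' A = r A` for every `A ∈ L`. -/
theorem statement_6 {α : Type*} [DecidableEq α]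
    (M : Finset α) (L : Finset (Finset α)) (hLne : L.Nonempty)
    (hLsub : ∀ Z ∈ L, Z ⊆ M)
    (meet join : Finset α → Finset α → Finset α)
    (hmeet : ∀ Z₁ ∈ L, ∀ Z₂ ∈ L, meet Z₁ Z₂ ∈ L ∧ meet Z₁ Z₂ ⊆ Z₁ ∧ meet Z₁ Z₂ ⊆ Z₂ ∧
      ∀ W ∈ L, W ⊆ Z₁ → W ⊆ Z₂ → W ⊆ meet Z₁ Z₂)
    (hjoin : ∀ Z₁ ∈ L, ∀ Z₂ ∈ L, join Z₁ Z₂ ∈ L ∧ Z₁ ⊆ join Z₁ Z₂ ∧ Z₂ ⊆ join Z₁ Z₂ ∧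
      ∀ W ∈ L, Z₁ ⊆ W → Z₂ ⊆ W → join Z₁ Z₂ ⊆ W)
    (r : Finset α → ℝ) (hr : ∀ Z ∈ L, 0 ≤ r Z)
    (μ : Finset α → ℝ)
    (hμnn : ∀ A, A ⊆ M → 0 ≤ μ A)
    (hμadd : ∀ A, A ⊆ M → μ A = ∑ a ∈ A, μ {a})
    (hchain : ∀ Z₁ ∈ L, ∀ Z₂ ∈ L, Z₁ ⊂ Z₂ →
      0 ≤ r Z₂ - r Z₁ ∧ r Z₂ - r Z₁ ≤ μ (Z₂ \ Z₁))
    (hcond : ∀ Z₁ ∈ L, ∀ Z₂ ∈ L, ¬ Z₁ ⊆ Z₂ → ¬ Z₂ ⊆ Z₁ →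
      r (meet Z₁ Z₂) + r (join Z₁ Z₂) + μ ((Z₁ ∩ Z₂) \ meet Z₁ Z₂) ≤ r Z₁ + r Z₂)
    (r' : Finset α → ℝ)
    (hr' : ∀ A, r' A = L.inf' hLne (fun Z => r Z + μ (A \ Z))) :
    (∀ A, A ⊆ M → 0 ≤ r' A) ∧
    (∀ A B, A ⊆ B → B ⊆ M → r' A ≤ r' B) ∧
    (∀ A B, A ⊆ M → B ⊆ M → r' (A ∪ B) + r' (A ∩ B) ≤ r' A + r' B) ∧
    (∀ A ∈ L, r' A = r A) := by
  -- basic measure facts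
  have hsing : ∀ x ∈ M, 0 ≤ μ {x} := by
    intro x hx
    exact hμnn {x} (Finset.singleton_subset_iff.mpr hx)
  have hμempty : μ ∅ = 0 := by
    simpa using hμadd ∅ (Finset.empty_subset M)
  have hμmono : ∀ S T : Finset α, S ⊆ T → T ⊆ M → μ S ≤ μ T := by
    intro S T hST hTM
    rw [hμadd S (hST.trans hTM), hμadd T hTM]
    exact Finset.sum_le_sum_of_subset_of_nonneg hST
      (fun i hi _ => hsing i (hTM hi))
  have hμunion : ∀ S T : Finset α, S ⊆ M → T ⊆ M → Disjoint S T →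
      μ (S ∪ T) = μ S + μ T := by
    intro S T hS hT hd
    rw [hμadd _ (Finset.union_subset hS hT), hμadd S hS, hμadd T hT,
      Finset.sum_union hd]
  have hμsum : ∀ S : Finset α, S ⊆ M → μ S = ∑ a ∈ M, if a ∈ S then μ {a} else 0 := by
    intro S hS
    rw [hμadd S hS, Finset.sum_ite_mem, Finset.inter_eq_right.mpr hS]
  -- the lattice inequality, valid for all pairs
  have hlat : ∀ Z₁ ∈ L, ∀ Z₂ ∈ L,
      r (meet Z₁ Z₂) + r (join Z₁ Z₂) + μ ((Z₁ ∩ Z₂) \ meet Z₁ Z₂) ≤ r Z₁ + r Z₂ := by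
    intro Z₁ h1 Z₂ h2
    by_cases h12 : Z₁ ⊆ Z₂
    · obtain ⟨hmL, hm1, hm2, hmg⟩ := hmeet Z₁ h1 Z₂ h2
      obtain ⟨hjL, hj1, hj2, hjg⟩ := hjoin Z₁ h1 Z₂ h2
      have hme : meet Z₁ Z₂ = Z₁ := Finset.Subset.antisymm hm1 (hmg Z₁ h1 (Finset.Subset.refl _) h12)
      have hje : join Z₁ Z₂ = Z₂ := Finset.Subset.antisymm (hjg Z₂ h2 h12 (Finset.Subset.refl _)) hj2
      have : (Z₁ ∩ Z₂) \ meet Z₁ Z₂ = ∅ := by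
        rw [hme]
        exact Finset.sdiff_eq_empty_iff_subset.mpr Finset.inter_subset_left
      rw [this, hμempty, hme, hje]
      linarith
    by_cases h21 : Z₂ ⊆ Z₁
    · obtain ⟨hmL, hm1, hm2, hmg⟩ := hmeet Z₁ h1 Z₂ h2
      obtain ⟨hjL, hj1, hj2, hjg⟩ := hjoin Z₁ h1 Z₂ h2
      have hme : meet Z₁ Z₂ = Z₂ := Finset.Subset.antisymm hm2 (hmg Z₂ h2 h21 (Finset.Subset.refl _))
      have hje : join Z₁ Z₂ = Z₁ := Finset.Subset.antisymm (hjg Z₁ h1 (Finset.Subset.refl _) h21) hj1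
      have : (Z₁ ∩ Z₂) \ meet Z₁ Z₂ = ∅ := by
        rw [hme]
        exact Finset.sdiff_eq_empty_iff_subset.mpr Finset.inter_subset_right
      rw [this, hμempty, hme, hje]
      linarith
    · exact hcond Z₁ h1 Z₂ h2 h12 h21
  refine ⟨?_, ?_, ?_, ?_⟩
  · -- nonnegativity
    intro A hA
    rw [hr' A]
    apply Finset.le_inf'
    intro Z hZ
    have : 0 ≤ μ (A \ Z) := hμnn _ ((Finset.sdiff_subset).trans hA)
    have := hr Z hZ
    linarith
  · -- monotonicity
    intro A B hAB hBM
    rw [hr' A, hr' B]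
    obtain ⟨Z, hZ, hZeq⟩ := Finset.exists_mem_eq_inf' hLne (fun Z => r Z + μ (B \ Z))
    rw [hZeq]
    have h1 : L.inf' hLne (fun Z => r Z + μ (A \ Z)) ≤ r Z + μ (A \ Z) :=
      Finset.inf'_le _ hZ
    have h2 : μ (A \ Z) ≤ μ (B \ Z) :=
      hμmono _ _ (Finset.sdiff_subset_sdiff hAB (Finset.Subset.refl _))
        ((Finset.sdiff_subset).trans hBM)
    linarith
  · -- submodularity
    intro A B hAM hBM
    obtain ⟨Z₁, hZ₁, hZ₁eq⟩ := Finset.exists_mem_eq_inf' hLne (fun Z => r Z + μ (A \ Z))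
    obtain ⟨Z₂, hZ₂, hZ₂eq⟩ := Finset.exists_mem_eq_inf' hLne (fun Z => r Z + μ (B \ Z))
    obtain ⟨hmL, hm1, hm2, hmg⟩ := hmeet Z₁ hZ₁ Z₂ hZ₂
    obtain ⟨hjL, hj1, hj2, hjg⟩ := hjoin Z₁ hZ₁ Z₂ hZ₂
    set W := meet Z₁ Z₂ with hW
    set J := join Z₁ Z₂ with hJ
    have hZ₁M := hLsub Z₁ hZ₁
    have hZ₂M := hLsub Z₂ hZ₂
    have hu : r' (A ∪ B) ≤ r J + μ ((A ∪ B) \ J) := by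
      rw [hr' (A ∪ B)]; exact Finset.inf'_le _ hjL
    have hi : r' (A ∩ B) ≤ r W + μ ((A ∩ B) \ W) := by
      rw [hr' (A ∩ B)]; exact Finset.inf'_le _ hmL
    have hlat' := hlat Z₁ hZ₁ Z₂ hZ₂
    have hABM : A ∪ B ⊆ M := Finset.union_subset hAM hBM
    have hmeas : μ ((A ∪ B) \ J) + μ ((A ∩ B) \ W) ≤
        μ (A \ Z₁) + μ (B \ Z₂) + μ ((Z₁ ∩ Z₂) \ W) := by
      have hpt : ∀ x ∈ M,
          (if x ∈ (A ∪ B) \ J then μ {x} else 0) + (if x ∈ (A ∩ B) \ W then μ {x} else 0) ≤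
          (if x ∈ A \ Z₁ then μ {x} else 0) + (if x ∈ B \ Z₂ then μ {x} else 0) +
            (if x ∈ (Z₁ ∩ Z₂) \ W then μ {x} else 0) :=
        fun x hx => count_aux A B Z₁ Z₂ W J x (μ {x}) (hsing x hx) hj1 hj2
      have hsum := Finset.sum_le_sum hpt
      simp only [Finset.sum_add_distrib] at hsum
      rw [← hμsum _ ((Finset.sdiff_subset).trans hABM),
        ← hμsum _ ((Finset.sdiff_subset).trans ((Finset.inter_subset_left).trans hAM)),
        ← hμsum _ ((Finset.sdiff_subset).trans hAM),
        ← hμsum _ ((Finset.sdiff_subset).trans hBM),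
        ← hμsum _ ((Finset.sdiff_subset).trans ((Finset.inter_subset_left).trans hZ₁M))] at hsum
      exact hsum
    rw [← hW, ← hJ] at hlat'
    rw [hr' A, hr' B, hZ₁eq, hZ₂eq]
    linarith
  · -- agreement on L
    intro A hA
    have hAM := hLsub A hA
    rw [hr' A]
    apply le_antisymm
    · have h1 : L.inf' hLne (fun Z => r Z + μ (A \ Z)) ≤ r A + μ (A \ A) :=
        Finset.inf'_le _ hA
      rw [Finset.sdiff_self, hμempty] at h1
      linarith
    · apply Finset.le_inf'
      intro Z hZ
      have hZM := hLsub Z hZ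
      by_cases hAZ : A ⊆ Z
      · by_cases hEq : A = Z
        · subst hEq
          have : 0 ≤ μ (A \ A) := hμnn _ ((Finset.sdiff_subset).trans hAM)
          linarith
        · have hss : A ⊂ Z := Finset.ssubset_iff_subset_ne.mpr ⟨hAZ, hEq⟩
          obtain ⟨hc1, hc2⟩ := hchain A hA Z hZ hss
          have : 0 ≤ μ (A \ Z) := hμnn _ ((Finset.sdiff_subset).trans hAM)
          linarith
      by_cases hZA : Z ⊆ A
      · have hss : Z ⊂ A := Finset.ssubset_iff_subset_ne.mpr
          ⟨hZA, fun h => hAZ (h ▸ Finset.Subset.refl A)⟩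
        obtain ⟨hc1, hc2⟩ := hchain Z hZ A hA hss
        linarith
      · obtain ⟨hmL, hm1, hm2, hmg⟩ := hmeet A hA Z hZ
        obtain ⟨hjL, hj1, hj2, hjg⟩ := hjoin A hA Z hZ
        set W := meet A Z with hWdef
        set J := join A Z with hJdef
        have hWA : W ⊂ A := Finset.ssubset_iff_subset_ne.mpr
          ⟨hm1, fun h => hAZ (h ▸ hm2)⟩
        have hAJ : A ⊂ J := Finset.ssubset_iff_subset_ne.mpr
          ⟨hj1, fun h => hZA (h ▸ hj2)⟩
        obtain ⟨hcW1, hcW2⟩ := hchain W hmL A hA hWA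
        obtain ⟨hcJ1, hcJ2⟩ := hchain A hA J hjL hAJ
        have hcnd := hcond A hA Z hZ hAZ hZA
        rw [← hWdef, ← hJdef] at hcnd
        have hsplit : A \ W = (A \ Z) ∪ ((A ∩ Z) \ W) := by
          ext x
          simp only [Finset.mem_sdiff, Finset.mem_union, Finset.mem_inter]
          constructor
          · rintro ⟨hxA, hxW⟩
            by_cases hxZ : x ∈ Z
            · exact Or.inr ⟨⟨hxA, hxZ⟩, hxW⟩
            · exact Or.inl ⟨hxA, hxZ⟩
          · rintro (⟨hxA, hxZ⟩ | ⟨⟨hxA, hxZ⟩, hxW⟩)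
            · exact ⟨hxA, fun h => hxZ (hm2 h)⟩
            · exact ⟨hxA, hxW⟩
        have hdisj : Disjoint (A \ Z) ((A ∩ Z) \ W) := by
          rw [Finset.disjoint_left]
          intro x hx hx2
          simp only [Finset.mem_sdiff, Finset.mem_inter] at hx hx2
          exact hx.2 hx2.1.2
        have hμsplit : μ (A \ W) = μ (A \ Z) + μ ((A ∩ Z) \ W) := by
          rw [hsplit]
          exact hμunion _ _ ((Finset.sdiff_subset).trans hAM)
            ((Finset.sdiff_subset).trans ((Finset.inter_subset_left).trans hAM)) hdisj
        linarith
end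

section
/- Let (f,M) be a polymatroid, N⊇M a finite set, (r,L) a ranked lattice on subsets of N, and μ a measure on N. Suppose: (1) for all Z∈L, Z∩M∈L; (2) every cyclic flat of (f,M) belongs to L; (3) if Z1,Z2∈L with Z1⊊Z2 then r(Z1)≤r(Z2); (4) if Z∈L and Z⊆M then r(Z)=f(Z); and (5) μ({a})=f({a}) for all a∈M. Then the convolution r'=r*μ satisfies r'(A)=f(A) for all A⊆M. -/
open scoped Classical

section Aux
variable {α : Type*} [DecidableEq α]

lemma poly_singleton_bound {M : Finset α} {f : Finset α → ℝ} (hf : IsPolymatroid M f) :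
    ∀ S : Finset α, S ⊆ M → ∀ B : Finset α, B ⊆ M → f (B ∪ S) ≤ f B + ∑ a ∈ S, f {a} := by
  obtain ⟨h0, hnn, hmono, hsub⟩ := hf
  intro S
  induction S using Finset.induction_on with
  | empty => intro _ B hB; simp
  | @insert a S _ ih =>
    intro hS B hB
    have haM : a ∈ M := hS (Finset.mem_insert_self a S)
    have hSM : S ⊆ M := fun x hx => hS (Finset.mem_insert_of_mem hx)
    have h1 : f ((B ∪ S) ∪ {a}) + f ((B ∪ S) ∩ {a}) ≤ f (B ∪ S) + f {a} :=
      hsub (B ∪ S) {a} (Finset.union_subset hB hSM) (by simpa using haM)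
    have h2 : 0 ≤ f ((B ∪ S) ∩ {a}) :=
      hnn _ ((Finset.inter_subset_right).trans (by simpa using haM))
    have h3 : B ∪ insert a S = (B ∪ S) ∪ {a} := by ext x; simp
    have h4 := ih hSM B hB
    rw [Finset.sum_insert (by assumption), h3]
    linarith

/-- The closure of a set in a polymatroid. -/
noncomputable def polyClos (M : Finset α) (f : Finset α → ℝ) (X : Finset α) : Finset α :=
  X ∪ M.filter (fun a => f (X ∪ {a}) = f X)

lemma subset_polyClos (M : Finset α) (f : Finset α → ℝ) (X : Finset α) :
    X ⊆ polyClos M f X := Finset.subset_union_left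

lemma polyClos_subset {M : Finset α} {f : Finset α → ℝ} {X : Finset α} (hX : X ⊆ M) :
    polyClos M f X ⊆ M :=
  Finset.union_subset hX (Finset.filter_subset _ _)

lemma f_polyClos {M : Finset α} {f : Finset α → ℝ} (hf : IsPolymatroid M f)
    {X : Finset α} (hX : X ⊆ M) : f (polyClos M f X) = f X := by
  obtain ⟨h0, hnn, hmono, hsub⟩ := hf
  suffices h : ∀ T : Finset α, T ⊆ M.filter (fun a => f (X ∪ {a}) = f X) → f (X ∪ T) = f X by
    exact h _ (Finset.Subset.refl _)
  intro T
  induction T using Finset.induction_on with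
  | empty => intro _; simp [h0]
  | @insert a T _ ih =>
    intro hT
    have haT : a ∈ M.filter (fun a => f (X ∪ {a}) = f X) := hT (Finset.mem_insert_self a T)
    have haM : a ∈ M := (Finset.mem_filter.mp haT).1
    have hfa : f (X ∪ {a}) = f X := (Finset.mem_filter.mp haT).2
    have hTM : T ⊆ M.filter (fun a => f (X ∪ {a}) = f X) :=
      fun x hx => hT (Finset.mem_insert_of_mem hx)
    have hTM' : T ⊆ M := hTM.trans (Finset.filter_subset _ _)
    have hIH : f (X ∪ T) = f X := ih hTM
    have hs : f ((X ∪ T) ∪ (X ∪ {a})) + f ((X ∪ T) ∩ (X ∪ {a})) ≤ f (X ∪ T) + f (X ∪ {a}) :=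
      hsub _ _ (Finset.union_subset hX hTM') (Finset.union_subset hX (by simpa using haM))
    have hU : (X ∪ T) ∪ (X ∪ {a}) = X ∪ insert a T := by ext x; simp; tauto
    have hXsub : X ⊆ (X ∪ T) ∩ (X ∪ {a}) :=
      Finset.subset_inter Finset.subset_union_left Finset.subset_union_left
    have hIsub : (X ∪ T) ∩ (X ∪ {a}) ⊆ M :=
      Finset.inter_subset_left.trans (Finset.union_subset hX hTM')
    have hI : f X ≤ f ((X ∪ T) ∩ (X ∪ {a})) := hmono _ _ hXsub hIsub
    have hge : f X ≤ f (X ∪ insert a T) :=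
      hmono _ _ Finset.subset_union_left
        (Finset.union_subset hX (fun x hx => by
          rcases Finset.mem_insert.mp hx with h | h
          · exact h ▸ haM
          · exact hTM' h))
    rw [hU] at hs
    linarith

lemma polyClos_flat {M : Finset α} {f : Finset α → ℝ} (hf : IsPolymatroid M f)
    {X : Finset α} (hX : X ⊆ M) : IsFlat M f (polyClos M f X) := by
  have hfc := f_polyClos hf hX
  obtain ⟨h0, hnn, hmono, hsub⟩ := hf
  refine ⟨polyClos_subset hX, ?_⟩
  intro G hG hGM
  have hle : f (polyClos M f X) ≤ f G := hmono _ _ hG.subset hGM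
  rcases lt_or_eq_of_le hle with h | h
  · exact h
  · exfalso
    obtain ⟨a, haG, hac⟩ := Finset.exists_of_ssubset hG
    have haM : a ∈ M := hGM haG
    have hXa : X ∪ {a} ⊆ G :=
      Finset.union_subset ((subset_polyClos M f X).trans hG.subset) (by simpa using haG)
    have h1 : f (X ∪ {a}) ≤ f G := hmono _ _ hXa hGM
    have h2 : f X ≤ f (X ∪ {a}) :=
      hmono _ _ Finset.subset_union_left (Finset.union_subset hX (by simpa using haM))
    have : f (X ∪ {a}) = f X := by rw [← hfc] at h2 ⊢ <;> linarith [h.symm ▸ hle]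
    exact hac (Finset.mem_union_right _ (Finset.mem_filter.mpr ⟨haM, this⟩))

lemma exists_cyclicFlat {M : Finset α} {f : Finset α → ℝ} (hf : IsPolymatroid M f) :
    ∀ n : ℕ, ∀ C : Finset α, C.card ≤ n → IsFlat M f C →
      ∃ D, IsCyclicFlat M f D ∧ D ⊆ C ∧ f D + ∑ a ∈ C \ D, f {a} ≤ f C := by
  obtain ⟨h0, hnn, hmono, hsub⟩ := hf
  intro n
  induction n with
  | zero =>
    intro C hcard hflat
    have hC : C = ∅ := Finset.card_eq_zero.mp (Nat.le_zero.mp hcard)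
    refine ⟨C, ⟨hflat, ?_⟩, Finset.Subset.refl _, by simp⟩
    intro i hi; rw [hC] at hi; simp at hi
  | succ n ih =>
    intro C hcard hflat
    by_cases hcyc : ∀ i ∈ C, f {i} = 0 ∨ f C - f (C \ {i}) < f {i}
    · exact ⟨C, ⟨hflat, hcyc⟩, Finset.Subset.refl _, by simp⟩
    · push_neg at hcyc
      obtain ⟨i, hiC, hfi0, hfige⟩ := hcyc
      have hiM : i ∈ M := hflat.1 hiC
      have hfipos : 0 < f {i} :=
        lt_of_le_of_ne (hnn _ (by simpa using hiM)) (Ne.symm hfi0)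
      have hsubM : C \ {i} ⊆ M := (Finset.sdiff_subset).trans hflat.1
      have hUe : (C \ {i}) ∪ {i} = C := by ext x; simp; intro hx; rcases eq_or_ne x i with h|h; simp [h, hiC]; tauto
      have hIe : (C \ {i}) ∩ {i} = ∅ := Finset.inter_singleton_of_notMem (by simp)
      have hstep : f C ≤ f (C \ {i}) + f {i} := by
        have := hsub (C \ {i}) {i} hsubM (by simpa using hiM)
        rw [hUe, hIe, h0] at this; linarith
      have heq : f (C \ {i}) = f C - f {i} := by linarith
      -- C \ {i} is a flat
      have hflat' : IsFlat M f (C \ {i}) := by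
        refine ⟨hsubM, ?_⟩
        intro G hG hGM
        by_cases hiG : i ∈ G
        · have hCG : C ⊆ G := by
            intro x hx
            rcases eq_or_ne x i with h | h
            · exact h ▸ hiG
            · exact hG.subset (Finset.mem_sdiff.mpr ⟨hx, by simp [h]⟩)
          have : f C ≤ f G := hmono _ _ hCG hGM
          linarith
        · by_contra hcon
          push_neg at hcon
          have hle : f (C \ {i}) ≤ f G := hmono _ _ hG.subset hGM
          have hGeq : f G = f (C \ {i}) := le_antisymm hcon hle
          have hGi : f (G ∪ {i}) ≤ f G + f {i} := by
            have := hsub G {i} hGM (by simpa using hiM)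
            have hIe2 : G ∩ {i} = ∅ := Finset.inter_singleton_of_notMem hiG
            rw [hIe2, h0] at this; linarith
          have hCss : C ⊂ G ∪ {i} := by
            obtain ⟨a, haG, hac⟩ := Finset.exists_of_ssubset hG
            have hai : a ≠ i := fun h => hiG (h ▸ haG)
            have haC : a ∉ C := fun h => hac (Finset.mem_sdiff.mpr ⟨h, by simp [hai]⟩)
            refine Finset.ssubset_iff_of_subset ?_ |>.mpr ⟨a, Finset.mem_union_left _ haG, haC⟩
            intro x hx
            rcases eq_or_ne x i with h | h
            · exact Finset.mem_union_right _ (by simp [h])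
            · exact Finset.mem_union_left _ (hG.subset (Finset.mem_sdiff.mpr ⟨hx, by simp [h]⟩))
          have hGiM : G ∪ {i} ⊆ M := Finset.union_subset hGM (by simpa using hiM)
          have := hflat.2 _ hCss hGiM
          linarith
      have hcard' : (C \ {i}).card ≤ n := by
        have h1 : (C \ {i}).card < C.card := by
          apply Finset.card_lt_card
          exact Finset.ssubset_iff_of_subset Finset.sdiff_subset |>.mpr
            ⟨i, hiC, by simp⟩
        omega
      obtain ⟨D, hD, hDC, hsum⟩ := ih (C \ {i}) hcard' hflat'
      refine ⟨D, hD, hDC.trans Finset.sdiff_subset, ?_⟩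
      have hiD : i ∉ D := fun h => by simpa using hDC h
      have hsplit : C \ D = insert i ((C \ {i}) \ D) := by
        ext x; simp; constructor
        · rintro ⟨hxC, hxD⟩
          rcases eq_or_ne x i with h | h
          · exact Or.inl h
          · exact Or.inr ⟨⟨hxC, h⟩, hxD⟩
        · rintro (rfl | ⟨⟨hxC, _⟩, hxD⟩)
          · exact ⟨hiC, hiD⟩
          · exact ⟨hxC, hxD⟩
      rw [hsplit, Finset.sum_insert (by simp)]
      linarith
end Aux

/-- Let `(f, M)` be a polymatroid, `N ⊇ M`, `(r, L)` a ranked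
lattice on subsets of `N`, and `μ` a measure on `N`.  If (1) `Z ∩ M ∈ L` for all
`Z ∈ L`, (2) every cyclic flat of `(f, M)` is in `L`, (3) `r` is monotone on `L`,
(4) `r Z = f Z` for every `Z ∈ L` with `Z ⊆ M`, and (5) `μ {a} = f {a}` for all
`a ∈ M`, then the convolution `r' = r * μ` satisfies `r' A = f A` for all `A ⊆ M`. -/

theorem statement_7 {α : Type*} [DecidableEq α]
    (M N : Finset α) (hMN : M ⊆ N)
    (f : Finset α → ℝ) (hf : IsPolymatroid M f)
    (L : Finset (Finset α)) (hLne : L.Nonempty) (hLsub : ∀ Z ∈ L, Z ⊆ N)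
    (meet join : Finset α → Finset α → Finset α)
    (hmeet : ∀ Z₁ ∈ L, ∀ Z₂ ∈ L, meet Z₁ Z₂ ∈ L ∧ meet Z₁ Z₂ ⊆ Z₁ ∧ meet Z₁ Z₂ ⊆ Z₂ ∧
      ∀ W ∈ L, W ⊆ Z₁ → W ⊆ Z₂ → W ⊆ meet Z₁ Z₂)
    (hjoin : ∀ Z₁ ∈ L, ∀ Z₂ ∈ L, join Z₁ Z₂ ∈ L ∧ Z₁ ⊆ join Z₁ Z₂ ∧ Z₂ ⊆ join Z₁ Z₂ ∧
      ∀ W ∈ L, Z₁ ⊆ W → Z₂ ⊆ W → join Z₁ Z₂ ⊆ W)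
    (r : Finset α → ℝ) (hr : ∀ Z ∈ L, 0 ≤ r Z)
    (μ : Finset α → ℝ)
    (hμnn : ∀ A, A ⊆ N → 0 ≤ μ A)
    (hμadd : ∀ A, A ⊆ N → μ A = ∑ a ∈ A, μ {a})
    (h1 : ∀ Z ∈ L, Z ∩ M ∈ L)
    (h2 : ∀ C, IsCyclicFlat M f C → C ∈ L)
    (h3 : ∀ Z₁ ∈ L, ∀ Z₂ ∈ L, Z₁ ⊂ Z₂ → r Z₁ ≤ r Z₂)
    (h4 : ∀ Z ∈ L, Z ⊆ M → r Z = f Z)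
    (h5 : ∀ a ∈ M, μ {a} = f {a})
    (r' : Finset α → ℝ)
    (hr' : ∀ A, r' A = L.inf' hLne (fun Z => r Z + μ (A \ Z))) :
    ∀ A, A ⊆ M → r' A = f A := by
  obtain ⟨h0, hnn, hmono, hsub⟩ := hf
  intro A hA
  rw [hr' A]
  apply le_antisymm
  · -- exhibit a cyclic flat achieving the bound
    obtain ⟨D, hD, hDC, hsum⟩ :=
      exists_cyclicFlat ⟨h0, hnn, hmono, hsub⟩ (polyClos M f A).card (polyClos M f A)
        le_rfl (polyClos_flat ⟨h0, hnn, hmono, hsub⟩ hA)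
    have hDL : D ∈ L := h2 D hD
    have hDM : D ⊆ M := hD.1.1
    have hrD : r D = f D := h4 D hDL hDM
    have hADN : A \ D ⊆ N := (Finset.sdiff_subset).trans (hA.trans hMN)
    have hμ : μ (A \ D) = ∑ a ∈ A \ D, f {a} := by
      rw [hμadd _ hADN]
      exact Finset.sum_congr rfl fun a ha => h5 a (hA (Finset.mem_sdiff.mp ha).1)
    have hle : ∑ a ∈ A \ D, f {a} ≤ ∑ a ∈ polyClos M f A \ D, f {a} := by
      apply Finset.sum_le_sum_of_subset_of_nonneg
      · exact Finset.sdiff_subset_sdiff ((subset_polyClos M f A)) (Finset.Subset.refl _)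
      · intro a ha _
        exact hnn _ (by simpa using (polyClos_subset hA) (Finset.mem_sdiff.mp ha).1)
    have hfc : f (polyClos M f A) = f A := f_polyClos ⟨h0, hnn, hmono, hsub⟩ hA
    have : r D + μ (A \ D) ≤ f A := by rw [hrD, hμ]; linarith
    exact le_trans (Finset.inf'_le _ hDL) this
  · apply Finset.le_inf'
    intro Z hZ
    have hZM : Z ∩ M ∈ L := h1 Z hZ
    have h4' : r (Z ∩ M) = f (Z ∩ M) := h4 _ hZM Finset.inter_subset_right
    have hrmono : r (Z ∩ M) ≤ r Z := by
      rcases eq_or_ne (Z ∩ M) Z with he | hne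
      · rw [he]
      · exact h3 _ hZM _ hZ (Finset.ssubset_iff_subset_ne.mpr ⟨Finset.inter_subset_left, hne⟩)
    have hAZM : A ∩ Z ⊆ M := Finset.inter_subset_left.trans hA
    have hAZZM : A ∩ Z ⊆ Z ∩ M :=
      Finset.subset_inter Finset.inter_subset_right (Finset.inter_subset_left.trans hA)
    have hmono1 : f (A ∩ Z) ≤ f (Z ∩ M) := hmono _ _ hAZZM Finset.inter_subset_right
    have key : f A ≤ f (A ∩ Z) + ∑ a ∈ A \ Z, f {a} := by
      have hb := poly_singleton_bound ⟨h0, hnn, hmono, hsub⟩ (A \ Z)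
        ((Finset.sdiff_subset).trans hA) (A ∩ Z) hAZM
      have hU : (A ∩ Z) ∪ (A \ Z) = A := by ext x; simp; tauto
      rw [hU] at hb; exact hb
    have hμZ : μ (A \ Z) = ∑ a ∈ A \ Z, f {a} := by
      rw [hμadd _ ((Finset.sdiff_subset).trans (hA.trans hMN))]
      exact Finset.sum_congr rfl fun a ha => h5 a (hA (Finset.mem_sdiff.mp ha).1)
    rw [hμZ]
    linarith
end

section
/- Let (f,M) be an integer polymatroid, and for each i∈M let (r_i,P_i) be a matroid of rank r_i(P_i)=f({i}), where the ground sets P_i are pairwise disjoint. Let N be the union of the P_i. Then there exists a matroid (g,N) such that g restricted to subsets of P_i equals r_i for every i∈M, and (f,M) is the factor of (g,N) under the map sending each element of P_i to i; that is, f(A)=g(⋃_{i∈A}P_i) for all A⊆M. -/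
open scoped Classical

/-- A matroid (as a polymatroid): an integer-valued polymatroid whose rank on
every singleton of the ground set is `0` or `1`. -/
def IsMatroidRk {β : Type*} [DecidableEq β] (N : Finset β) (g : Finset β → ℝ) : Prop :=
  IsPolymatroid N g ∧ (∀ A, A ⊆ N → ∃ n : ℤ, g A = (n : ℝ)) ∧
  (∀ a ∈ N, g {a} = 0 ∨ g {a} = 1)

/-- Let `(f, M)` be an integer polymatroid and, for each `i ∈ M`,
let `(rᵢ, Pᵢ)` be a matroid of rank `f {i}` with pairwise disjoint ground sets.
Then on `N = ⋃ᵢ Pᵢ` there is a matroid `(g, N)` restricting to `rᵢ` on each `Pᵢ`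
such that `(f, M)` is the factor of `(g, N)` under the map sending each element of
`Pᵢ` to `i`, i.e. `f A = g (⋃_{i ∈ A} Pᵢ)` for all `A ⊆ M`. -/
theorem statement_10 {α β : Type*} [DecidableEq α] [DecidableEq β]
    (M : Finset α) (f : Finset α → ℝ) (hf : IsPolymatroid M f)
    (hint : ∀ A, A ⊆ M → ∃ n : ℤ, f A = (n : ℝ))
    (P : α → Finset β) (r : α → (Finset β → ℝ))
    (hdisj : ∀ i ∈ M, ∀ j ∈ M, i ≠ j → Disjoint (P i) (P j))
    (hmat : ∀ i ∈ M, IsMatroidRk (P i) (r i))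
    (hrank : ∀ i ∈ M, r i (P i) = f {i}) :
    ∃ g : Finset β → ℝ,
      IsMatroidRk (M.biUnion P) g ∧
      (∀ i ∈ M, ∀ A, A ⊆ P i → g A = r i A) ∧
      (∀ A, A ⊆ M → f A = g (A.biUnion P)) := by
  classical
  obtain ⟨hf0, hfnn, hfmono, hfsub⟩ := hf
  have hr0 : ∀ i ∈ M, r i ∅ = 0 := fun i hi => (hmat i hi).1.1
  have hrnn : ∀ i ∈ M, ∀ A, A ⊆ P i → 0 ≤ r i A := fun i hi => (hmat i hi).1.2.1
  have hrmono : ∀ i ∈ M, ∀ A B, A ⊆ B → B ⊆ P i → r i A ≤ r i B :=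
    fun i hi => (hmat i hi).1.2.2.1
  have hrsub : ∀ i ∈ M, ∀ A B, A ⊆ P i → B ⊆ P i →
      r i (A ∪ B) + r i (A ∩ B) ≤ r i A + r i B := fun i hi => (hmat i hi).1.2.2.2
  have hrint : ∀ i ∈ M, ∀ A, A ⊆ P i → ∃ n : ℤ, r i A = (n : ℝ) :=
    fun i hi => (hmat i hi).2.1
  have hne : (∅ : Finset α) ∈ M.powerset := Finset.empty_mem_powerset M
  set g : Finset β → ℝ := fun X =>
    (M.powerset).inf' ⟨∅, hne⟩ (fun A => f A + ∑ i ∈ M \ A, r i (X ∩ P i)) with hgdef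
  have hub : ∀ (X : Finset β), ∀ A ⊆ M,
      g X ≤ f A + ∑ i ∈ M \ A, r i (X ∩ P i) := by
    intro X A hA
    exact Finset.inf'_le _ (Finset.mem_powerset.2 hA)
  have hlb : ∀ (X : Finset β) (c : ℝ),
      (∀ A ⊆ M, c ≤ f A + ∑ i ∈ M \ A, r i (X ∩ P i)) → c ≤ g X := by
    intro X c h
    exact Finset.le_inf' _ _ (fun A hA => h A (Finset.mem_powerset.1 hA))
  have hmin : ∀ (X : Finset β), ∃ A, A ⊆ M ∧
      g X = f A + ∑ i ∈ M \ A, r i (X ∩ P i) := by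
    intro X
    obtain ⟨A, hA, h⟩ := Finset.exists_mem_eq_inf' (⟨∅, hne⟩ : (M.powerset).Nonempty)
      (fun A => f A + ∑ i ∈ M \ A, r i (X ∩ P i))
    exact ⟨A, Finset.mem_powerset.1 hA, h⟩
  -- restriction property
  have hres : ∀ i ∈ M, ∀ A, A ⊆ P i → g A = r i A := by
    intro i hi A hA
    have hsum : ∑ j ∈ M, r j (A ∩ P j) = r i A := by
      have h0 := Finset.sum_eq_single_of_mem (f := fun j => r j (A ∩ P j)) i hi (by
        intro j hj hji
        show r j (A ∩ P j) = 0
        have hd : Disjoint A (P j) :=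
          Disjoint.mono_left hA (hdisj i hi j hj (fun h => hji h.symm))
        rw [Finset.disjoint_iff_inter_eq_empty.1 hd, hr0 j hj])
      have h1 : ∑ j ∈ M, r j (A ∩ P j) = r i (A ∩ P i) := h0
      rw [h1, Finset.inter_eq_left.2 hA]
    apply le_antisymm
    · have h1 := hub A ∅ (Finset.empty_subset M)
      rw [hf0, zero_add, Finset.sdiff_empty, hsum] at h1
      exact h1
    · apply hlb
      intro B hB
      by_cases hiB : i ∈ B
      · have h1 : r i A ≤ f B := by
          calc r i A ≤ r i (P i) := hrmono i hi A (P i) hA (le_refl _)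
          _ = f {i} := hrank i hi
          _ ≤ f B := hfmono {i} B (Finset.singleton_subset_iff.2 hiB) hB
        have h2 : (0:ℝ) ≤ ∑ j ∈ M \ B, r j (A ∩ P j) :=
          Finset.sum_nonneg (fun j hj =>
            hrnn j (Finset.mem_sdiff.1 hj).1 _ Finset.inter_subset_right)
        linarith
      · have h1 : r i A ≤ ∑ j ∈ M \ B, r j (A ∩ P j) := by
          have hmem : i ∈ M \ B := Finset.mem_sdiff.2 ⟨hi, hiB⟩
          have h0 := Finset.single_le_sum (f := fun j => r j (A ∩ P j))
            (fun j hj => hrnn j (Finset.mem_sdiff.1 hj).1 _ Finset.inter_subset_right) hmem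
          have h1 : r i (A ∩ P i) ≤ ∑ j ∈ M \ B, r j (A ∩ P j) := h0
          rwa [Finset.inter_eq_left.2 hA] at h1
        have h2 : (0:ℝ) ≤ f B := hfnn B hB
        linarith
  -- subadditivity of f over singletons
  have hadd : ∀ (D : Finset α), D ⊆ M → ∀ C, C ⊆ M →
      f (C ∪ D) ≤ f C + ∑ i ∈ D, f {i} := by
    intro D
    induction D using Finset.induction_on with
    | empty => intro _ C hC; simp
    | @insert a D ha ih =>
      intro hD C hC
      have haM : a ∈ M := hD (Finset.mem_insert_self a D)
      have hDM : D ⊆ M := fun x hx => hD (Finset.mem_insert_of_mem hx)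
      have hCD : C ∪ D ⊆ M := Finset.union_subset hC hDM
      have h1 : f ((C ∪ D) ∪ {a}) + f ((C ∪ D) ∩ {a}) ≤ f (C ∪ D) + f {a} :=
        hfsub (C ∪ D) {a} hCD (Finset.singleton_subset_iff.2 haM)
      have h2 : (0:ℝ) ≤ f ((C ∪ D) ∩ {a}) :=
        hfnn _ ((Finset.inter_subset_left).trans hCD)
      have h3 : f (C ∪ D) ≤ f C + ∑ i ∈ D, f {i} := ih hDM C hC
      have h4 : C ∪ insert a D = (C ∪ D) ∪ {a} := by
        ext x
        simp [Finset.mem_union, Finset.mem_insert]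
      rw [h4, Finset.sum_insert ha]
      linarith
  -- intersections of biUnions with the parts
  have hinter1 : ∀ (A : Finset α), A ⊆ M → ∀ i ∈ A, (A.biUnion P) ∩ P i = P i := by
    intro A hA i hi
    exact Finset.inter_eq_right.2 (Finset.subset_biUnion_of_mem P hi)
  have hinter0 : ∀ (A : Finset α), A ⊆ M → ∀ i ∈ M, i ∉ A → (A.biUnion P) ∩ P i = ∅ := by
    intro A hA i hiM hiA
    apply Finset.eq_empty_of_forall_notMem
    intro x hx
    obtain ⟨hx1, hx2⟩ := Finset.mem_inter.1 hx
    obtain ⟨j, hjA, hxj⟩ := Finset.mem_biUnion.1 hx1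
    have hji : j ≠ i := fun h => hiA (h ▸ hjA)
    exact Finset.disjoint_left.1 (hdisj j (hA hjA) i hiM hji) hxj hx2
  -- factor property
  have hfac : ∀ A, A ⊆ M → f A = g (A.biUnion P) := by
    intro A hA
    apply le_antisymm
    · apply hlb
      intro B hB
      have hsum1 : ∑ i ∈ A \ B, r i ((A.biUnion P) ∩ P i) = ∑ i ∈ A \ B, f {i} := by
        apply Finset.sum_congr rfl
        intro i hi
        have hiA := (Finset.mem_sdiff.1 hi).1
        rw [hinter1 A hA i hiA, hrank i (hA hiA)]
      have hsub2 : A \ B ⊆ M \ B :=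
        fun x hx => Finset.mem_sdiff.2 ⟨hA (Finset.mem_sdiff.1 hx).1, (Finset.mem_sdiff.1 hx).2⟩
      have hsum2 : ∑ i ∈ A \ B, r i ((A.biUnion P) ∩ P i)
          ≤ ∑ i ∈ M \ B, r i ((A.biUnion P) ∩ P i) :=
        Finset.sum_le_sum_of_subset_of_nonneg hsub2 (fun i hi _ =>
          hrnn i (Finset.mem_sdiff.1 hi).1 _ Finset.inter_subset_right)
      have hAeq : (A ∩ B) ∪ (A \ B) = A := by
        ext x; simp [Finset.mem_union, Finset.mem_inter, Finset.mem_sdiff]; tauto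
      have h1 : f A ≤ f (A ∩ B) + ∑ i ∈ A \ B, f {i} := by
        have := hadd (A \ B) ((Finset.sdiff_subset).trans hA) (A ∩ B)
          ((Finset.inter_subset_left).trans hA)
        rwa [hAeq] at this
      have h2 : f (A ∩ B) ≤ f B := hfmono (A ∩ B) B Finset.inter_subset_right hB
      linarith
    · have h1 := hub (A.biUnion P) A hA
      have hsum : ∑ i ∈ M \ A, r i ((A.biUnion P) ∩ P i) = 0 := by
        apply Finset.sum_eq_zero
        intro i hi
        obtain ⟨hiM, hiA⟩ := Finset.mem_sdiff.1 hi
        rw [hinter0 A hA i hiM hiA, hr0 i hiM]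
      rw [hsum, add_zero] at h1
      exact h1
  -- nonnegativity of g
  have hgnn : ∀ (X : Finset β), 0 ≤ g X := by
    intro X
    apply hlb
    intro B hB
    have h1 := hfnn B hB
    have h2 : (0:ℝ) ≤ ∑ i ∈ M \ B, r i (X ∩ P i) :=
      Finset.sum_nonneg (fun i hi =>
        hrnn i (Finset.mem_sdiff.1 hi).1 _ Finset.inter_subset_right)
    linarith
  -- g of empty
  have hg0 : g ∅ = 0 := by
    apply le_antisymm
    · have h1 := hub ∅ ∅ (Finset.empty_subset M)
      rw [hf0, zero_add, Finset.sdiff_empty] at h1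
      have : ∑ i ∈ M, r i (∅ ∩ P i) = 0 :=
        Finset.sum_eq_zero (fun i hi => by rw [Finset.empty_inter, hr0 i hi])
      rw [this] at h1
      exact h1
    · exact hgnn ∅
  -- monotonicity of g
  have hgmono : ∀ (X Y : Finset β), X ⊆ Y → g X ≤ g Y := by
    intro X Y hXY
    obtain ⟨B, hB, hgy⟩ := hmin Y
    rw [hgy]
    calc g X ≤ f B + ∑ i ∈ M \ B, r i (X ∩ P i) := hub X B hB
    _ ≤ f B + ∑ i ∈ M \ B, r i (Y ∩ P i) := by
        apply add_le_add_right
        apply Finset.sum_le_sum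
        intro i hi
        exact hrmono i (Finset.mem_sdiff.1 hi).1 _ _
          (Finset.inter_subset_inter hXY (le_refl _)) Finset.inter_subset_right
  -- helper: sum over M \ S as a sum over M with ite
  have hsd : ∀ (S : Finset α) (t : α → ℝ),
      ∑ i ∈ M \ S, t i = ∑ i ∈ M, if i ∈ S then 0 else t i := by
    intro S t
    rw [Finset.sdiff_eq_filter, Finset.sum_filter]
    apply Finset.sum_congr rfl
    intro i _
    by_cases h : i ∈ S <;> simp [h]
  -- submodularity of g
  have hgsub : ∀ (X Y : Finset β), g (X ∪ Y) + g (X ∩ Y) ≤ g X + g Y := by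
    intro X Y
    obtain ⟨A, hA, hgX⟩ := hmin X
    obtain ⟨B, hB, hgY⟩ := hmin Y
    have h1 := hub (X ∪ Y) (A ∪ B) (Finset.union_subset hA hB)
    have h2 := hub (X ∩ Y) (A ∩ B) ((Finset.inter_subset_left).trans hA)
    have hfAB : f (A ∪ B) + f (A ∩ B) ≤ f A + f B := hfsub A B hA hB
    have hsums : (∑ i ∈ M \ (A ∪ B), r i ((X ∪ Y) ∩ P i))
        + (∑ i ∈ M \ (A ∩ B), r i ((X ∩ Y) ∩ P i))
        ≤ (∑ i ∈ M \ A, r i (X ∩ P i)) + (∑ i ∈ M \ B, r i (Y ∩ P i)) := by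
      rw [hsd (A ∪ B), hsd (A ∩ B), hsd A, hsd B, ← Finset.sum_add_distrib,
        ← Finset.sum_add_distrib]
      apply Finset.sum_le_sum
      intro i hi
      have hXP : X ∩ P i ⊆ P i := Finset.inter_subset_right
      have hYP : Y ∩ P i ⊆ P i := Finset.inter_subset_right
      have hu : (X ∪ Y) ∩ P i = (X ∩ P i) ∪ (Y ∩ P i) := Finset.union_inter_distrib_right X Y (P i)
      have hv : (X ∩ Y) ∩ P i = (X ∩ P i) ∩ (Y ∩ P i) := by
        ext x; simp only [Finset.mem_inter]; tauto
      by_cases hiA : i ∈ A <;> by_cases hiB : i ∈ B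
      · simp [hiA, hiB, Finset.mem_union, Finset.mem_inter]
      · have hmv : r i ((X ∩ Y) ∩ P i) ≤ r i (Y ∩ P i) := by
          rw [hv]; exact hrmono i hi _ _ Finset.inter_subset_right hYP
        simpa [hiA, hiB, Finset.mem_union, Finset.mem_inter] using hmv
      · have hmv : r i ((X ∩ Y) ∩ P i) ≤ r i (X ∩ P i) := by
          rw [hv]; exact hrmono i hi _ _ Finset.inter_subset_left hXP
        simpa [hiA, hiB, Finset.mem_union, Finset.mem_inter] using hmv
      · have hs := hrsub i hi (X ∩ P i) (Y ∩ P i) hXP hYP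
        rw [← hu, ← hv] at hs
        simpa [hiA, hiB, Finset.mem_union, Finset.mem_inter] using hs
    rw [hgX, hgY]
    linarith
  refine ⟨g, ⟨⟨hg0, fun A _ => hgnn A, fun A B hAB _ => hgmono A B hAB,
    fun A B _ _ => hgsub A B⟩, ?_, ?_⟩, hres, hfac⟩
  · -- integrality
    intro X _
    obtain ⟨B, hB, hgX⟩ := hmin X
    obtain ⟨n, hn⟩ := hint B hB
    have hsum : ∃ m : ℤ, ∑ i ∈ M \ B, r i (X ∩ P i) = (m : ℝ) := by
      refine Finset.sum_induction _ (fun x => ∃ m : ℤ, x = (m : ℝ)) ?_ ⟨0, by simp⟩ ?_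
      · rintro a b ⟨p, rfl⟩ ⟨q, rfl⟩
        exact ⟨p + q, by push_cast; ring⟩
      · intro i hi
        exact hrint i (Finset.mem_sdiff.1 hi).1 _ Finset.inter_subset_right
    obtain ⟨m, hm⟩ := hsum
    exact ⟨n + m, by rw [hgX, hn, hm]; push_cast; ring⟩
  · -- singleton ranks
    intro a ha
    obtain ⟨i, hi, hai⟩ := Finset.mem_biUnion.1 ha
    rw [hres i hi {a} (Finset.singleton_subset_iff.2 hai)]
    exact (hmat i hi).2.2 a hai
end

section
/- Let (f,M) be a polymatroid, X a proper subset of M, and (f',M−X) the contract of (f,M) along X, i.e., f'(A)=f(A∪X)−f(X) for A⊆M−X. Let (g',N') be any extension of (f',M−X) with N'∩X=∅. Then there is an extension (g,N) of (f,M) with N=N'∪X such that (g',N') is the contract of (g,N) along X, i.e., g'(A)=g(A∪X)−g(X) for all A⊆N'. -/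
open scoped Classical

/-- Diminishing-returns style inequality for a polymatroid. -/
lemma dimin {α : Type*} [DecidableEq α] {N : Finset α} {p : Finset α → ℝ}
    (hp : IsPolymatroid N p) {S T C : Finset α} (hS : S ⊆ N) (hT : T ⊆ N) (hC : C ⊆ S) :
    p (S ∪ T) + p C ≤ p S + p (T ∪ C) := by
  obtain ⟨-, -, hmono, hsub⟩ := hp
  have h1 := hsub S (T ∪ C) hS (Finset.union_subset hT (hC.trans hS))
  have e : S ∪ (T ∪ C) = S ∪ T := by
    ext a
    simp only [Finset.mem_union]
    constructor
    · rintro (h | h | h)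
      exacts [Or.inl h, Or.inr h, Or.inl (hC h)]
    · tauto
  have h2 : p C ≤ p (S ∩ (T ∪ C)) := by
    apply hmono
    · intro a ha
      exact Finset.mem_inter.2 ⟨hC ha, Finset.mem_union_right _ ha⟩
    · exact Finset.inter_subset_left.trans hS
  rw [e] at h1
  linarith

/-- An extension of a contract is a contract of an extension.
Let `X ⊊ M`, let `(f', M \ X)` be the contract of `(f, M)` along `X`
(`f' A = f (A ∪ X) - f X`), and let `(g', N')` be any extension of `(f', M \ X)`
with `N'` disjoint from `X`.  Then on `N = N' ∪ X` there is an extension `(g, N)`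
of `(f, M)` such that `(g', N')` is the contract of `(g, N)` along `X`:
`g' A = g (A ∪ X) - g X` for all `A ⊆ N'`. -/
theorem statement_11 {α : Type*} [DecidableEq α]
    (M : Finset α) (f : Finset α → ℝ) (hf : IsPolymatroid M f)
    (X : Finset α) (hX : X ⊂ M)
    (f' : Finset α → ℝ)
    (hf'con : ∀ A, A ⊆ M \ X → f' A = f (A ∪ X) - f X)
    (N' : Finset α) (g' : Finset α → ℝ)
    (hg' : IsExtension (M \ X) f' N' g')
    (hdisj : Disjoint N' X) :
    ∃ g : Finset α → ℝ,
      IsExtension M f (N' ∪ X) g ∧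
      ∀ A, A ⊆ N' → g' A = g (A ∪ X) - g X := by

  classical
  have hXM : X ⊆ M := hX.subset
  obtain ⟨hMN', hg'poly, hgf⟩ := hg'
  obtain ⟨hg0, hgnn, hgmono, hgsub⟩ := id hg'poly
  obtain ⟨hf0, hfnn, hfmono, hfsub⟩ := id hf
  have hgval : ∀ A, A ⊆ M \ X → g' A = f (A ∪ X) - f X := by
    intro A hA
    rw [hgf A hA, hf'con A hA]
  have hAXsub : ∀ {A : Finset α}, A ⊆ N' ∪ X → A \ X ⊆ N' := by
    intro A hA a ha
    rw [Finset.mem_sdiff] at ha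
    rcases Finset.mem_union.1 (hA ha.1) with h | h
    · exact h
    · exact absurd h ha.2
  have hAMsub : ∀ {A : Finset α}, A ⊆ N' ∪ X → A \ M ⊆ N' := by
    intro A hA a ha
    rw [Finset.mem_sdiff] at ha
    rcases Finset.mem_union.1 (hA ha.1) with h | h
    · exact h
    · exact absurd (hXM h) ha.2
  have vsub : ∀ A B : Finset α, A ⊆ N' ∪ X → B ⊆ N' ∪ X →
      g' ((A ∪ B) \ X) + g' ((A ∩ B) \ X) ≤ g' (A \ X) + g' (B \ X) := by
    intro A B hA hB
    have e1 : (A ∪ B) \ X = A \ X ∪ B \ X := by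
      ext a; simp only [Finset.mem_sdiff, Finset.mem_union]; tauto
    have e2 : (A ∩ B) \ X = (A \ X) ∩ (B \ X) := by
      ext a; simp only [Finset.mem_sdiff, Finset.mem_inter]; tauto
    rw [e1, e2]
    exact hgsub _ _ (hAXsub hA) (hAXsub hB)
  have wsub : ∀ A B : Finset α, A ⊆ N' ∪ X → B ⊆ N' ∪ X →
      f ((A ∪ B) ∩ M) + g' ((A ∪ B) \ M) + (f ((A ∩ B) ∩ M) + g' ((A ∩ B) \ M)) ≤
        f (A ∩ M) + g' (A \ M) + (f (B ∩ M) + g' (B \ M)) := by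
    intro A B hA hB
    have e1 : (A ∪ B) ∩ M = (A ∩ M) ∪ (B ∩ M) := by
      ext a; simp only [Finset.mem_inter, Finset.mem_union]; tauto
    have e2 : (A ∩ B) ∩ M = (A ∩ M) ∩ (B ∩ M) := by
      ext a; simp only [Finset.mem_inter]; tauto
    have e3 : (A ∪ B) \ M = A \ M ∪ B \ M := by
      ext a; simp only [Finset.mem_sdiff, Finset.mem_union]; tauto
    have e4 : (A ∩ B) \ M = (A \ M) ∩ (B \ M) := by
      ext a; simp only [Finset.mem_sdiff, Finset.mem_inter]; tauto
    have h1 := hfsub (A ∩ M) (B ∩ M) Finset.inter_subset_right Finset.inter_subset_right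
    have h2 := hgsub (A \ M) (B \ M) (hAMsub hA) (hAMsub hB)
    rw [e1, e2, e3, e4]
    linarith
  have cross : ∀ A B : Finset α, A ⊆ N' ∪ X → B ⊆ N' ∪ X →
      g' ((A ∪ B) \ X) + (f ((A ∩ B) ∩ M) + g' ((A ∩ B) \ M)) ≤
        g' (A \ X) + (f (B ∩ M) + g' (B \ M)) := by
    intro A B hA hB
    set S := A \ X ∪ B \ M with hSdef
    set T := (B ∩ M) \ X with hTdef
    set C := ((A ∩ B) ∩ M) \ X with hCdef
    have hSN : S ⊆ N' := Finset.union_subset (hAXsub hA) (hAMsub hB)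
    have hTMX : T ⊆ M \ X := by
      intro a ha
      rw [Finset.mem_sdiff] at ha ⊢
      exact ⟨(Finset.mem_inter.1 ha.1).2, ha.2⟩
    have hCMX : C ⊆ M \ X := by
      intro a ha
      rw [Finset.mem_sdiff] at ha ⊢
      exact ⟨(Finset.mem_inter.1 ha.1).2, ha.2⟩
    have hCS : C ⊆ S := by
      intro a ha
      simp only [hCdef, hSdef, Finset.mem_sdiff, Finset.mem_inter, Finset.mem_union] at ha ⊢
      tauto
    have h_d : g' (S ∪ T) + g' C ≤ g' S + g' (T ∪ C) :=
      dimin hg'poly hSN (hTMX.trans hMN') hCS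
    have h_b := hgsub (A \ X) (B \ M) (hAXsub hA) (hAMsub hB)
    have h_a : g' ((A ∩ B) \ M) ≤ g' ((A \ X) ∩ (B \ M)) := by
      apply hgmono
      · intro a ha
        have hax : a ∈ X → a ∈ M := fun h => hXM h
        simp only [Finset.mem_sdiff, Finset.mem_inter] at ha ⊢
        tauto
      · exact Finset.inter_subset_left.trans (hAXsub hA)
    have h_e1 : g' (T ∪ C) = f ((T ∪ C) ∪ X) - f X :=
      hgval _ (Finset.union_subset hTMX hCMX)
    have h_e2 : g' C = f (C ∪ X) - f X := hgval _ hCMX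
    have hCM : C ∪ X ⊆ M :=
      Finset.union_subset (hCMX.trans Finset.sdiff_subset) hXM
    have hUM : (A ∩ B) ∩ M ⊆ C ∪ X := by
      intro a ha
      simp only [hCdef, Finset.mem_union, Finset.mem_sdiff, Finset.mem_inter] at ha ⊢
      tauto
    have h_f : f ((C ∪ X) ∪ T) + f ((A ∩ B) ∩ M) ≤ f (C ∪ X) + f (T ∪ (A ∩ B) ∩ M) :=
      dimin hf hCM (hTMX.trans Finset.sdiff_subset) hUM
    have h_f2 : f (T ∪ (A ∩ B) ∩ M) ≤ f (B ∩ M) := by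
      apply hfmono
      · intro a ha
        simp only [hTdef, Finset.mem_union, Finset.mem_sdiff, Finset.mem_inter] at ha ⊢
        tauto
      · exact Finset.inter_subset_right
    have h_eq1 : (A ∪ B) \ X = S ∪ T := by
      ext a
      have hax : a ∈ X → a ∈ M := fun h => hXM h
      simp only [hSdef, hTdef, Finset.mem_sdiff, Finset.mem_union, Finset.mem_inter]
      tauto
    have h_eq2 : (T ∪ C) ∪ X = (C ∪ X) ∪ T := by
      ext a
      simp only [Finset.mem_union]
      tauto
    rw [h_eq2] at h_e1
    rw [h_eq1]
    linarith
  refine ⟨fun A => min (g' (A \ X) + f X) (f (A ∩ M) + g' (A \ M)),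
    ⟨?_, ⟨?_, ?_, ?_, ?_⟩, ?_⟩, ?_⟩
  · -- M ⊆ N' ∪ X
    intro a ha
    by_cases hax : a ∈ X
    · exact Finset.mem_union_right _ hax
    · exact Finset.mem_union_left _ (hMN' (Finset.mem_sdiff.2 ⟨ha, hax⟩))
  · -- g ∅ = 0
    show min (g' (∅ \ X) + f X) (f (∅ ∩ M) + g' (∅ \ M)) = 0
    simp only [Finset.empty_sdiff, Finset.empty_inter]
    rw [hg0, hf0]
    simp only [zero_add, add_zero]
    exact min_eq_right (hfnn X hXM)
  · -- nonneg
    intro A hA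
    refine le_min (add_nonneg (hgnn _ (hAXsub hA)) (hfnn X hXM))
      (add_nonneg (hfnn _ Finset.inter_subset_right) (hgnn _ (hAMsub hA)))
  · -- monotone
    intro A B hAB hB
    dsimp only
    apply min_le_min
    · exact add_le_add_left
        (hgmono _ _ (Finset.sdiff_subset_sdiff hAB (le_refl X)) (hAXsub hB)) _
    · exact add_le_add
        (hfmono _ _ (Finset.inter_subset_inter hAB (le_refl M)) Finset.inter_subset_right)
        (hgmono _ _ (Finset.sdiff_subset_sdiff hAB (le_refl M)) (hAMsub hB))
  · -- submodular
    intro A B hA hB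
    dsimp only
    have m1 := min_le_left (g' ((A ∪ B) \ X) + f X) (f ((A ∪ B) ∩ M) + g' ((A ∪ B) \ M))
    have m2 := min_le_right (g' ((A ∪ B) \ X) + f X) (f ((A ∪ B) ∩ M) + g' ((A ∪ B) \ M))
    have m3 := min_le_left (g' ((A ∩ B) \ X) + f X) (f ((A ∩ B) ∩ M) + g' ((A ∩ B) \ M))
    have m4 := min_le_right (g' ((A ∩ B) \ X) + f X) (f ((A ∩ B) ∩ M) + g' ((A ∩ B) \ M))
    rcases le_total (g' (A \ X) + f X) (f (A ∩ M) + g' (A \ M)) with h1 | h1 <;>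
      rcases le_total (g' (B \ X) + f X) (f (B ∩ M) + g' (B \ M)) with h2 | h2
    · rw [min_eq_left h1, min_eq_left h2]
      have := vsub A B hA hB
      linarith
    · rw [min_eq_left h1, min_eq_right h2]
      have := cross A B hA hB
      linarith
    · rw [min_eq_right h1, min_eq_left h2]
      have hc := cross B A hB hA
      rw [Finset.union_comm B A, Finset.inter_comm B A] at hc
      linarith
    · rw [min_eq_right h1, min_eq_right h2]
      have := wsub A B hA hB
      linarith
  · -- agrees with f on M
    intro A hAM'
    dsimp only
    have h1 : A ∩ M = A := Finset.inter_eq_left.mpr hAM'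
    have h2 : A \ M = ∅ := Finset.sdiff_eq_empty_iff_subset.mpr hAM'
    have h3 : g' (A \ X) = f (A ∪ X) - f X := by
      rw [hgval (A \ X) (Finset.sdiff_subset_sdiff hAM' (le_refl X)),
        Finset.sdiff_union_self_eq_union]
    rw [h1, h2, h3, hg0, add_zero]
    have h4 : f A ≤ f (A ∪ X) :=
      hfmono _ _ Finset.subset_union_left (Finset.union_subset hAM' hXM)
    have h5 : f (A ∪ X) - f X + f X = f (A ∪ X) := by ring
    rw [h5]
    exact min_eq_right h4
  · -- contract condition
    intro A hAN'
    dsimp only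
    have hdA : ∀ a ∈ A, a ∉ X := fun a ha hx => (Finset.disjoint_left.1 hdisj (hAN' ha)) hx
    have hgX : min (g' (X \ X) + f X) (f (X ∩ M) + g' (X \ M)) = f X := by
      rw [Finset.sdiff_self, Finset.inter_eq_left.mpr hXM,
        Finset.sdiff_eq_empty_iff_subset.mpr hXM, hg0]
      simp
    have e1 : (A ∪ X) \ X = A := by
      ext a
      have := hdA a
      simp only [Finset.mem_sdiff, Finset.mem_union]
      tauto
    have e2 : (A ∪ X) ∩ M = (A ∩ M) ∪ X := by
      ext a
      have hax : a ∈ X → a ∈ M := fun h => hXM h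
      simp only [Finset.mem_inter, Finset.mem_union]
      tauto
    have e3 : (A ∪ X) \ M = A \ M := by
      ext a
      have hax : a ∈ X → a ∈ M := fun h => hXM h
      simp only [Finset.mem_sdiff, Finset.mem_union]
      tauto
    have hAMX : A ∩ M ⊆ M \ X := by
      intro a ha
      rw [Finset.mem_inter] at ha
      exact Finset.mem_sdiff.2 ⟨ha.2, hdA a ha.1⟩
    have e4 : f ((A ∩ M) ∪ X) = g' (A ∩ M) + f X := by
      rw [hgval _ hAMX]
      ring
    have e5 : g' A ≤ g' (A ∩ M) + g' (A \ M) := by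
      have h := hgsub (A ∩ M) (A \ M) (Finset.inter_subset_left.trans hAN')
        (Finset.sdiff_subset.trans hAN')
      have e6 : (A ∩ M) ∪ (A \ M) = A := by
        ext a
        simp only [Finset.mem_union, Finset.mem_inter, Finset.mem_sdiff]
        tauto
      have e7 : (A ∩ M) ∩ (A \ M) = ∅ := by
        ext a
        simp only [Finset.mem_inter, Finset.mem_sdiff, Finset.notMem_empty, iff_false]
        tauto
      rw [e6, e7, hg0] at h
      linarith
    rw [hgX, e1, e2, e3, e4]
    have hmin : min (g' A + f X) (g' (A ∩ M) + f X + g' (A \ M)) = g' A + f X :=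
      min_eq_left (by linarith)
    rw [hmin]
    ring
end

section
/- Every contract of a sticky polymatroid is sticky: if (f,M) is a sticky polymatroid and X⊆M, then the contract (f',M−X), defined by f'(A)=f(A∪X)−f(X) for A⊆M−X, is sticky. -/
open scoped Classical

private lemma exists_good_perm {α : Type*} [DecidableEq α] [Infinite α] :
    ∀ (S V : Finset α), ∃ σ : Equiv.Perm α,
      (∀ a ∈ S, σ a ∉ V) ∧ (∀ a, a ∉ S → a ∉ S.image σ → σ a = a) := by
  intro S
  refine Finset.induction_on S ?_ ?_
  · intro V; exact ⟨1, by simp, by simp⟩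
  · intro s S' hsS' ih V
    obtain ⟨σ', h1, h2⟩ := ih (insert s V)
    obtain ⟨t, ht⟩ := Infinite.exists_notMem_finset (V ∪ insert s S' ∪ S'.image σ')
    simp only [Finset.mem_union, Finset.mem_insert, not_or] at ht
    have hσ's : σ' s = s := by
      apply h2 s hsS'
      intro hmem
      obtain ⟨b, hb, hbe⟩ := Finset.mem_image.mp hmem
      have := h1 b hb
      rw [hbe] at this
      exact this (Finset.mem_insert_self s V)
    refine ⟨σ'.trans (Equiv.swap s t), ?_, ?_⟩
    · intro a ha
      rcases Finset.mem_insert.mp ha with rfl | ha'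
      · simpa [Equiv.trans_apply, hσ's, Equiv.swap_apply_left] using ht.1.1
      · have hne_s : σ' a ≠ s := by
          intro h
          have := h1 a ha'; rw [h] at this; exact this (Finset.mem_insert_self s V)
        have hne_t : σ' a ≠ t := by
          intro h; exact ht.2 (h ▸ Finset.mem_image_of_mem σ' ha')
        have := h1 a ha'
        simp only [Finset.mem_insert, not_or] at this
        simpa [Equiv.trans_apply, Equiv.swap_apply_of_ne_of_ne hne_s hne_t] using this.2
    · intro a ha hima
      have haS' : a ∉ S' := fun h => ha (Finset.mem_insert_of_mem h)
      have hane_s : a ≠ s := fun h => ha (h ▸ Finset.mem_insert_self s S')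
      have himσ' : a ∉ S'.image σ' := by
        intro hmem
        obtain ⟨b, hb, hbe⟩ := Finset.mem_image.mp hmem
        apply hima
        refine Finset.mem_image.mpr ⟨b, Finset.mem_insert_of_mem hb, ?_⟩
        have hbs : σ' b ≠ s := by
          intro h
          have := h1 b hb; rw [h] at this; exact this (Finset.mem_insert_self s V)
        have hbt : σ' b ≠ t := by
          intro h; exact ht.2 (h ▸ Finset.mem_image_of_mem σ' hb)
        rw [Equiv.trans_apply, Equiv.swap_apply_of_ne_of_ne hbs hbt, hbe]
      have hσ'a : σ' a = a := h2 a haS' himσ'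
      have hane_t : a ≠ t := by
        intro h
        apply hima
        refine Finset.mem_image.mpr ⟨s, Finset.mem_insert_self s S', ?_⟩
        simp [Equiv.trans_apply, hσ's, h]
      simp [Equiv.trans_apply, hσ'a, Equiv.swap_apply_of_ne_of_ne hane_s hane_t]

private lemma contract_ext {α : Type*} [DecidableEq α]
    (M : Finset α) (f : Finset α → ℝ) (hf : IsPolymatroid M f)
    (X : Finset α) (hX : X ⊆ M)
    (N : Finset α) (hMN : M \ X ⊆ N) (hNX : ∀ a ∈ N, a ∉ X)
    (g : Finset α → ℝ) (hg : IsPolymatroid N g)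
    (hgf : ∀ A, A ⊆ M \ X → g A = f (A ∪ X) - f X) :
    ∃ g', IsExtension M f (N ∪ X) g' ∧ ∀ A, A ⊆ N → g' (A ∪ X) = g A + f X := by
  obtain ⟨hf0, hfnn, hfmono, hfsub⟩ := hf
  obtain ⟨hg0, hgnn, hgmono, hgsub⟩ := hg
  have hfX : 0 ≤ f X := hfnn X hX
  refine ⟨fun A => if A ∩ (N \ M) = ∅ then f (A ∩ M) else g (A ∩ N) + f X, ?_, ?_⟩
  · -- IsExtension M f (N ∪ X) g'
    -- key1 : general bound
    have key1 : ∀ A : Finset α, f (A ∩ M) ≤ g (A ∩ N) + f X := by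
      intro A
      have h1 : A ∩ M ⊆ (A ∩ (M \ X)) ∪ X := by
        intro a ha
        simp only [Finset.mem_inter, Finset.mem_union, Finset.mem_sdiff] at *
        by_cases hx : a ∈ X
        · tauto
        · tauto
      have h2 : (A ∩ (M \ X)) ∪ X ⊆ M := by
        intro a ha
        simp only [Finset.mem_union, Finset.mem_inter, Finset.mem_sdiff] at ha
        rcases ha with ⟨_, h, _⟩ | h
        · exact h
        · exact hX h
      have h3 : f (A ∩ M) ≤ f ((A ∩ (M \ X)) ∪ X) := hfmono _ _ h1 h2
      have h4 : g (A ∩ (M \ X)) = f ((A ∩ (M \ X)) ∪ X) - f X :=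
        hgf _ (Finset.inter_subset_right)
      have h5 : g (A ∩ (M \ X)) ≤ g (A ∩ N) := by
        refine hgmono _ _ ?_ Finset.inter_subset_right
        exact Finset.inter_subset_inter (le_refl A) hMN
      linarith
    -- key3 : mixed submodular case
    have key3 : ∀ A B : Finset α, B ∩ (N \ M) = ∅ →
        g ((A ∪ B) ∩ N) + f ((A ∩ B) ∩ M) ≤ g (A ∩ N) + f (B ∩ M) := by
      intro A B hB
      rw [Finset.eq_empty_iff_forall_notMem] at hB
      simp only [Finset.mem_inter, Finset.mem_sdiff, not_and, not_not] at hB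
      set P := B ∩ (M \ X) with hP
      set C := (A ∩ B) ∩ (M \ X) with hC
      set R := B ∩ X with hR
      have hPM : P ⊆ M \ X := Finset.inter_subset_right
      have hCM : C ⊆ M \ X := Finset.inter_subset_right
      have hBN : B ∩ N = P := by
        ext a
        simp only [hP, Finset.mem_inter, Finset.mem_sdiff]
        constructor
        · rintro ⟨ha, hn⟩
          exact ⟨ha, hB a ha hn, hNX a hn⟩
        · rintro ⟨ha, hm, hx⟩
          exact ⟨ha, hMN (Finset.mem_sdiff.mpr ⟨hm, hx⟩)⟩
      have hUn : (A ∪ B) ∩ N = (A ∩ N) ∪ P := by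
        rw [Finset.union_inter_distrib_right, hBN]
      have hANP : (A ∩ N) ∩ P = C := by
        ext a
        simp only [hP, hC, Finset.mem_inter, Finset.mem_sdiff]
        constructor
        · rintro ⟨⟨ha, _⟩, hb, hm, hx⟩
          exact ⟨⟨ha, hb⟩, hm, hx⟩
        · rintro ⟨⟨ha, hb⟩, hm, hx⟩
          exact ⟨⟨ha, hMN (Finset.mem_sdiff.mpr ⟨hm, hx⟩)⟩, hb, hm, hx⟩
      have hsubg : g ((A ∩ N) ∪ P) + g C ≤ g (A ∩ N) + g P := by
        have := hgsub (A ∩ N) P Finset.inter_subset_right (hPM.trans (by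
          intro a ha; exact hMN ha))
        rwa [hANP] at this
      have hgP : g P = f (P ∪ X) - f X := hgf P hPM
      have hgC : g C = f (C ∪ X) - f X := hgf C hCM
      have hfm : f ((A ∩ B) ∩ M) ≤ f (C ∪ R) := by
        refine hfmono _ _ ?_ ?_
        · intro a ha
          simp only [Finset.mem_inter] at ha
          simp only [hC, hR, Finset.mem_union, Finset.mem_inter, Finset.mem_sdiff]
          by_cases hx : a ∈ X
          · exact Or.inr ⟨ha.1.2, hx⟩
          · exact Or.inl ⟨ha.1, ha.2, hx⟩
        · intro a ha
          simp only [hC, hR, Finset.mem_union, Finset.mem_inter, Finset.mem_sdiff] at ha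
          rcases ha with ⟨_, h, _⟩ | ⟨_, h⟩
          · exact h
          · exact hX h
      have hCP : C ⊆ P := by
        intro a ha
        simp only [hC, hP, Finset.mem_inter, Finset.mem_sdiff] at *
        tauto
      have hU : (C ∪ X) ∪ (P ∪ R) = P ∪ X := by
        ext a
        simp only [hR, Finset.mem_union, Finset.mem_inter]
        constructor
        · rintro ((h | h) | (h | h))
          · exact Or.inl (hCP h)
          · exact Or.inr h
          · exact Or.inl h
          · exact Or.inr h.2
        · tauto
      have hI : (C ∪ X) ∩ (P ∪ R) = C ∪ R := by
        ext a
        simp only [hR, Finset.mem_union, Finset.mem_inter]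
        constructor
        · rintro ⟨h1, h2⟩
          rcases h1 with h1 | h1
          · exact Or.inl h1
          · rcases h2 with h2 | h2
            · exact absurd h1 (Finset.mem_sdiff.mp (hPM h2)).2
            · exact Or.inr h2
        · rintro (h | h)
          · exact ⟨Or.inl h, Or.inl (hCP h)⟩
          · exact ⟨Or.inr h.2, Or.inr h⟩
      have hsubf : f (P ∪ X) + f (C ∪ R) ≤ f (C ∪ X) + f (P ∪ R) := by
        have hCXM : C ∪ X ⊆ M := by
          intro a ha
          rcases Finset.mem_union.mp ha with h | h
          · exact (Finset.mem_sdiff.mp (hCM h)).1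
          · exact hX h
        have hPRM : P ∪ R ⊆ M := by
          intro a ha
          rcases Finset.mem_union.mp ha with h | h
          · exact (Finset.mem_sdiff.mp (hPM h)).1
          · exact hX (Finset.mem_inter.mp h).2
        have := hfsub (C ∪ X) (P ∪ R) hCXM hPRM
        rw [hU, hI] at this
        linarith
      have hBM : B ∩ M = P ∪ R := by
        ext a
        simp only [hP, hR, Finset.mem_inter, Finset.mem_union, Finset.mem_sdiff]
        constructor
        · rintro ⟨hb, hm⟩
          by_cases hx : a ∈ X
          · exact Or.inr ⟨hb, hx⟩
          · exact Or.inl ⟨hb, hm, hx⟩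
        · rintro (⟨hb, hm, _⟩ | ⟨hb, hx⟩)
          · exact ⟨hb, hm⟩
          · exact ⟨hb, hX hx⟩
      rw [hUn, hBM]
      linarith
    refine ⟨?_, ⟨?_, ?_, ?_, ?_⟩, ?_⟩
    · -- M ⊆ N ∪ X
      intro a ha
      by_cases hx : a ∈ X
      · exact Finset.mem_union_right _ hx
      · exact Finset.mem_union_left _ (hMN (Finset.mem_sdiff.mpr ⟨ha, hx⟩))
    · simp [hf0]
    · intro A hA
      by_cases h : A ∩ (N \ M) = ∅
      · simp only [h, if_pos rfl]
        exact hfnn _ Finset.inter_subset_right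
      · simp only [if_neg h]
        have := hgnn (A ∩ N) Finset.inter_subset_right
        linarith
    · -- monotone
      intro A B hAB hB
      by_cases hb : B ∩ (N \ M) = ∅
      · have ha : A ∩ (N \ M) = ∅ := by
          rw [Finset.eq_empty_iff_forall_notMem] at *
          intro a haa
          exact hb a (Finset.mem_inter.mpr ⟨hAB (Finset.mem_inter.mp haa).1,
            (Finset.mem_inter.mp haa).2⟩)
        simp only [ha, hb, if_pos rfl]
        exact hfmono _ _ (Finset.inter_subset_inter hAB (le_refl M))
          Finset.inter_subset_right
      · simp only [if_neg hb]
        by_cases ha : A ∩ (N \ M) = ∅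
        · simp only [ha, if_pos rfl]
          calc f (A ∩ M) ≤ g (A ∩ N) + f X := key1 A
            _ ≤ g (B ∩ N) + f X := by
                have := hgmono (A ∩ N) (B ∩ N)
                  (Finset.inter_subset_inter hAB (le_refl N)) Finset.inter_subset_right
                linarith
        · simp only [if_neg ha]
          have := hgmono (A ∩ N) (B ∩ N)
            (Finset.inter_subset_inter hAB (le_refl N)) Finset.inter_subset_right
          linarith
    · -- submodular
      intro A B hA hB
      have hUd : (A ∪ B) ∩ (N \ M) = (A ∩ (N \ M)) ∪ (B ∩ (N \ M)) :=
        Finset.union_inter_distrib_right _ _ _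
      have hId : (A ∩ B) ∩ (N \ M) = (A ∩ (N \ M)) ∩ (B ∩ (N \ M)) := by
        ext a; simp only [Finset.mem_inter]; tauto
      have hUN : (A ∪ B) ∩ N = (A ∩ N) ∪ (B ∩ N) := Finset.union_inter_distrib_right _ _ _
      have hIN : (A ∩ B) ∩ N = (A ∩ N) ∩ (B ∩ N) := by
        ext a; simp only [Finset.mem_inter]; tauto
      have hUM : (A ∪ B) ∩ M = (A ∩ M) ∪ (B ∩ M) := Finset.union_inter_distrib_right _ _ _
      have hIM : (A ∩ B) ∩ M = (A ∩ M) ∩ (B ∩ M) := by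
        ext a; simp only [Finset.mem_inter]; tauto
      by_cases ha : A ∩ (N \ M) = ∅
      · by_cases hb : B ∩ (N \ M) = ∅
        · have hu : (A ∪ B) ∩ (N \ M) = ∅ := by rw [hUd, ha, hb]; simp
          have hi : (A ∩ B) ∩ (N \ M) = ∅ := by rw [hId, ha, hb]; simp
          simp only [ha, hb, hu, hi, if_pos rfl]
          rw [hUM, hIM]
          exact hfsub _ _ Finset.inter_subset_right Finset.inter_subset_right
        · have hu : (A ∪ B) ∩ (N \ M) ≠ ∅ := by
            rw [hUd]; intro h
            exact hb (Finset.subset_empty.mp (h ▸ Finset.subset_union_right))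
          have hi : (A ∩ B) ∩ (N \ M) = ∅ := by
            rw [hId, ha]; simp
          simp only [if_pos ha, if_neg hb, if_neg hu, if_pos hi]
          have := key3 B A ha
          rw [Finset.union_comm B A, Finset.inter_comm B A] at this
          linarith
      · by_cases hb : B ∩ (N \ M) = ∅
        · have hu : (A ∪ B) ∩ (N \ M) ≠ ∅ := by
            rw [hUd]; intro h
            exact ha (Finset.subset_empty.mp (h ▸ Finset.subset_union_left))
          have hi : (A ∩ B) ∩ (N \ M) = ∅ := by
            rw [hId, hb]; simp
          simp only [if_neg ha, if_pos hb, if_neg hu, if_pos hi]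
          have := key3 A B hb
          linarith
        · have hu : (A ∪ B) ∩ (N \ M) ≠ ∅ := by
            rw [hUd]; intro h
            exact ha (Finset.subset_empty.mp (h ▸ Finset.subset_union_left))
          simp only [if_neg ha, if_neg hb, if_neg hu]
          have hgs : g ((A ∩ N) ∪ (B ∩ N)) + g ((A ∩ N) ∩ (B ∩ N)) ≤ g (A ∩ N) + g (B ∩ N) :=
            hgsub _ _ Finset.inter_subset_right Finset.inter_subset_right
          by_cases hi : (A ∩ B) ∩ (N \ M) = ∅
          · simp only [if_pos hi]
            have := key1 (A ∩ B)
            rw [hUN, hIN] at *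
            linarith
          · simp only [if_neg hi]
            rw [hUN, hIN]
            linarith
    · -- restriction to M
      intro A hA
      have h : A ∩ (N \ M) = ∅ := by
        rw [Finset.eq_empty_iff_forall_notMem]
        intro a haa
        have := Finset.mem_inter.mp haa
        exact (Finset.mem_sdiff.mp this.2).2 (hA this.1)
      simp only [if_pos h]
      rw [Finset.inter_eq_left.mpr hA]
  · -- g' (A ∪ X) = g A + f X
    intro A hA
    have hAXN : (A ∪ X) ∩ N = A := by
      ext a
      simp only [Finset.mem_inter, Finset.mem_union]
      constructor
      · rintro ⟨h | h, hn⟩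
        · exact h
        · exact absurd h (hNX a hn)
      · intro h
        exact ⟨Or.inl h, hA h⟩
    by_cases h : (A ∪ X) ∩ (N \ M) = ∅
    · simp only [if_pos h]
      have hAMX : A ⊆ M \ X := by
        intro a haa
        rw [Finset.eq_empty_iff_forall_notMem] at h
        have hn := hA haa
        have := h a
        simp only [Finset.mem_inter, Finset.mem_union, Finset.mem_sdiff, not_and, not_not] at this
        exact Finset.mem_sdiff.mpr ⟨this (Or.inl haa) hn, hNX a hn⟩
      have hAXM : (A ∪ X) ∩ M = A ∪ X := by
        rw [Finset.inter_eq_left]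
        intro a haa
        rcases Finset.mem_union.mp haa with h' | h'
        · exact (Finset.mem_sdiff.mp (hAMX h')).1
        · exact hX h'
      rw [hAXM, hgf A hAMX]
      ring
    · simp only [if_neg h, hAXN]

private lemma poly_image {α : Type*} [DecidableEq α] (σ : Equiv.Perm α)
    (N : Finset α) (g : Finset α → ℝ) (hg : IsPolymatroid N g) :
    IsPolymatroid (N.image σ) (fun B => g (B.image σ.symm)) := by
  obtain ⟨hg0, hgnn, hgmono, hgsub⟩ := hg
  have hback : ∀ B : Finset α, B ⊆ N.image σ → B.image σ.symm ⊆ N := by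
    intro B hB
    have := Finset.image_subset_image (f := (σ.symm : α → α)) hB
    rwa [Finset.image_image, Equiv.symm_comp_self, Finset.image_id] at this
  refine ⟨by simp [hg0], fun B hB => hgnn _ (hback B hB), ?_, ?_⟩
  · intro A B hAB hB
    exact hgmono _ _ (Finset.image_subset_image hAB) (hback B hB)
  · intro A B hA hB
    have := hgsub (A.image σ.symm) (B.image σ.symm) (hback A hA) (hback B hB)
    simpa [Finset.image_union, Finset.image_inter _ _ (σ.symm.injective)] using this

/-- Every contract of a sticky polymatroid is sticky: if `(f, M)`
is sticky and `X ⊆ M`, then the contract `(f', M \ X)`, given by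
`f' A = f (A ∪ X) - f X` for `A ⊆ M \ X`, is sticky. -/
theorem statement_12 {α : Type*} [DecidableEq α] [Infinite α]
    (M : Finset α) (f : Finset α → ℝ) (hf : IsPolymatroid M f)
    (hsticky : Sticky M f)
    (X : Finset α) (hX : X ⊆ M)
    (f' : Finset α → ℝ)
    (hf'con : ∀ A, A ⊆ M \ X → f' A = f (A ∪ X) - f X) :
    Sticky (M \ X) f' := by
  intro N₁ g₁ N₂ g₂ he₁ he₂ hN12
  obtain ⟨hMN₁, hg₁, hg₁f⟩ := he₁
  obtain ⟨hMN₂, hg₂, hg₂f⟩ := he₂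
  obtain ⟨σ, hσ1, hσ2⟩ := exists_good_perm ((N₁ ∪ N₂) ∩ X) (M ∪ N₁ ∪ N₂)
  have hXV : X ⊆ M ∪ N₁ ∪ N₂ := fun a ha =>
    Finset.mem_union_left _ (Finset.mem_union_left _ (hX ha))
  have hfix : ∀ a, a ∈ M ∪ N₁ ∪ N₂ → a ∉ X → σ a = a := by
    intro a haV haX
    refine hσ2 a ?_ ?_
    · simp only [Finset.mem_inter, not_and]
      intro _; exact haX
    · intro hmem
      obtain ⟨b, hb, hbe⟩ := Finset.mem_image.mp hmem
      exact hσ1 b hb (hbe ▸ haV)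
  have hfixMX : ∀ a ∈ M \ X, σ a = a := by
    intro a ha
    rw [Finset.mem_sdiff] at ha
    exact hfix a (Finset.mem_union_left _ (Finset.mem_union_left _ ha.1)) ha.2
  have himgMX : (M \ X).image σ = M \ X := by
    rw [Finset.image_congr (g := id) (fun a ha => hfixMX a ha), Finset.image_id]
  have hsymmfixMX : ∀ a ∈ M \ X, σ.symm a = a := by
    intro a ha
    exact (Equiv.symm_apply_eq σ).mpr (hfixMX a ha).symm
  -- images of ground sets
  have hNV : N₁ ∪ N₂ ⊆ M ∪ N₁ ∪ N₂ := by
    rw [Finset.union_assoc]; exact Finset.subset_union_right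
  have himgNX : ∀ (Nn : Finset α), Nn ⊆ N₁ ∪ N₂ → ∀ b ∈ Nn.image σ, b ∉ X := by
    intro Nn hNn b hb hbX
    obtain ⟨a, ha, rfl⟩ := Finset.mem_image.mp hb
    by_cases haX : a ∈ X
    · exact hσ1 a (Finset.mem_inter.mpr ⟨hNn ha, haX⟩) (hXV hbX)
    · rw [hfix a (hNV (hNn ha)) haX] at hbX
      exact haX hbX
  have hMXimg : ∀ (Nn : Finset α), M \ X ⊆ Nn → M \ X ⊆ Nn.image σ := by
    intro Nn hNn a ha
    rw [← hfixMX a ha]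
    exact Finset.mem_image_of_mem σ (hNn ha)
  -- transported extensions
  have himgsub : ∀ A : Finset α, A ⊆ M \ X → A.image σ.symm = A := by
    intro A hA
    rw [Finset.image_congr (g := id) (fun a ha => hsymmfixMX a (hA ha)), Finset.image_id]
  have hgf' : ∀ (Nn : Finset α) (g : Finset α → ℝ), (∀ A, A ⊆ M \ X → g A = f' A) →
      ∀ A, A ⊆ M \ X → g (A.image σ.symm) = f (A ∪ X) - f X := by
    intro Nn g hgfl A hA
    rw [himgsub A hA, hgfl A hA, hf'con A hA]
  obtain ⟨g₁', hext₁, hb₁⟩ := contract_ext M f hf X hX (N₁.image σ)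
    (hMXimg N₁ hMN₁) (himgNX N₁ Finset.subset_union_left)
    (fun B => g₁ (B.image σ.symm)) (poly_image σ N₁ g₁ hg₁)
    (hgf' N₁ g₁ hg₁f)
  obtain ⟨g₂', hext₂, hb₂⟩ := contract_ext M f hf X hX (N₂.image σ)
    (hMXimg N₂ hMN₂) (himgNX N₂ Finset.subset_union_right)
    (fun B => g₂ (B.image σ.symm)) (poly_image σ N₂ g₂ hg₂)
    (hgf' N₂ g₂ hg₂f)
  have hinter : (N₁.image σ ∪ X) ∩ (N₂.image σ ∪ X) = M := by
    have h12 : N₁.image σ ∩ N₂.image σ = M \ X := by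
      rw [← Finset.image_inter _ _ σ.injective, hN12, himgMX]
    have hdistr : (N₁.image σ ∪ X) ∩ (N₂.image σ ∪ X) = (N₁.image σ ∩ N₂.image σ) ∪ X := by
      ext a
      simp only [Finset.mem_inter, Finset.mem_union]
      tauto
    rw [hdistr, h12, Finset.sdiff_union_of_subset hX]
  obtain ⟨ht, hpoly, hres₁, hres₂⟩ := hsticky (N₁.image σ ∪ X) g₁' (N₂.image σ ∪ X) g₂'
    hext₁ hext₂ hinter
  obtain ⟨ht0, htnn, htmono, htsub⟩ := hpoly
  -- ground set facts
  have hground : ∀ A : Finset α, A ⊆ N₁ ∪ N₂ →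
      A.image σ ∪ X ⊆ (N₁.image σ ∪ X) ∪ (N₂.image σ ∪ X) := by
    intro A hA
    intro a ha
    rcases Finset.mem_union.mp ha with h | h
    · obtain ⟨b, hb, rfl⟩ := Finset.mem_image.mp h
      rcases Finset.mem_union.mp (hA hb) with h' | h'
      · exact Finset.mem_union_left _ (Finset.mem_union_left _ (Finset.mem_image_of_mem σ h'))
      · exact Finset.mem_union_right _ (Finset.mem_union_left _ (Finset.mem_image_of_mem σ h'))
    · exact Finset.mem_union_left _ (Finset.mem_union_right _ h)
  have htX : ht X = f X := by
    rw [hres₁ X Finset.subset_union_right]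
    exact hext₁.2.2 X hX
  refine ⟨fun A => ht (A.image σ ∪ X) - f X, ⟨?_, ?_, ?_, ?_⟩, ?_, ?_⟩
  · simp [htX]
  · intro A hA
    dsimp only
    have h1 : X ⊆ A.image σ ∪ X := Finset.subset_union_right
    have := htmono X (A.image σ ∪ X) h1 (hground A hA)
    rw [htX] at this
    simp only [sub_nonneg]
    linarith
  · intro A B hAB hB
    dsimp only
    have := htmono (A.image σ ∪ X) (B.image σ ∪ X)
      (Finset.union_subset_union (Finset.image_subset_image hAB) (le_refl X))
      (hground B hB)
    linarith
  · intro A B hA hB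
    dsimp only
    have hU : (A.image σ ∪ X) ∪ (B.image σ ∪ X) = (A ∪ B).image σ ∪ X := by
      rw [Finset.image_union]
      ext a
      simp only [Finset.mem_union]
      tauto
    have hI : (A.image σ ∪ X) ∩ (B.image σ ∪ X) = (A ∩ B).image σ ∪ X := by
      rw [Finset.image_inter _ _ σ.injective]
      ext a
      simp only [Finset.mem_union, Finset.mem_inter]
      tauto
    have := htsub (A.image σ ∪ X) (B.image σ ∪ X) (hground A hA) (hground B hB)
    rw [hU, hI] at this
    linarith
  · intro A hA
    have hsub : A.image σ ⊆ N₁.image σ := Finset.image_subset_image hA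
    have h1 : A.image σ ∪ X ⊆ N₁.image σ ∪ X :=
      Finset.union_subset_union hsub (le_refl X)
    dsimp only
    rw [hres₁ _ h1, hb₁ _ hsub]
    simp only [Finset.image_image, Equiv.symm_comp_self, Finset.image_id]
    ring
  · intro A hA
    have hsub : A.image σ ⊆ N₂.image σ := Finset.image_subset_image hA
    have h1 : A.image σ ∪ X ⊆ N₂.image σ ∪ X :=
      Finset.union_subset_union hsub (le_refl X)
    dsimp only
    rw [hres₂ _ h1, hb₂ _ hsub]
    simp only [Finset.image_image, Equiv.symm_comp_self, Finset.image_id]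
    ring
end

section
/- Let (f,M) be a polymatroid. Then for arbitrary subsets A,B,P,Q,Y of M, Ing(A,B;P,Q) + Comm(A,B;Y) ≥ 0. -/
open scoped Classical

/-- `f(I,J|K) = f(I∪K) + f(J∪K) - f(K) - f(I∪J∪K)`. -/
def condMI {α : Type*} [DecidableEq α] (f : Finset α → ℝ) (I J K : Finset α) : ℝ :=
  f (I ∪ K) + f (J ∪ K) - f K - f (I ∪ J ∪ K)

/-- `f(Y|A) = f(Y∪A) - f(A)`. -/
def condRk {α : Type*} [DecidableEq α] (f : Finset α → ℝ) (Y A : Finset α) : ℝ :=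
  f (Y ∪ A) - f A

/-- The common information expression `Comm(A,B;Y)`. -/
def commExpr {α : Type*} [DecidableEq α] (f : Finset α → ℝ) (A B Y : Finset α) : ℝ :=
  condMI f A B Y + condRk f Y A + condRk f Y B + condRk f Y (A ∪ B)

/-- The Ingleton expression `Ing(A,B;P,Q)`. -/
def ingExpr {α : Type*} [DecidableEq α] (f : Finset α → ℝ) (A B P Q : Finset α) : ℝ :=
  -(f A + f B - f (A ∪ B)) + condMI f A B P + condMI f A B Q + (f P + f Q - f (P ∪ Q))

/-- The conditional common information expression `Comm(A,B;Y|E)`. -/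
def commExprCond {α : Type*} [DecidableEq α] (f : Finset α → ℝ) (A B Y E : Finset α) : ℝ :=
  condMI f A B (Y ∪ E) + condRk f Y (A ∪ E) + condRk f Y (B ∪ E) + condRk f Y (A ∪ B ∪ E)

/-- The conditional Ingleton expression `Ing(A,B;P,Q|E)`. -/
def ingExprCond {α : Type*} [DecidableEq α] (f : Finset α → ℝ) (A B P Q E : Finset α) : ℝ :=
  -condMI f A B E + condMI f A B (P ∪ E) + condMI f A B (Q ∪ E) + condMI f P Q E


private lemma poly_key {α : Type*} [DecidableEq α] {M : Finset α} {f : Finset α → ℝ}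
    (hf : IsPolymatroid M f) {X Z U W : Finset α}
    (hX : X ⊆ M) (hZ : Z ⊆ M) (hU : U = X ∪ Z) (hW1 : W ⊆ X) (hW2 : W ⊆ Z) :
    f U + f W ≤ f X + f Z := by
  have h1 := hf.2.2.2 X Z hX hZ
  have h2 : f W ≤ f (X ∩ Z) :=
    hf.2.2.1 W (X ∩ Z) (Finset.subset_inter hW1 hW2)
      ((Finset.inter_subset_left).trans hX)
  rw [hU]; linarith

private lemma poly_mono {α : Type*} [DecidableEq α] {M : Finset α} {f : Finset α → ℝ}
    (hf : IsPolymatroid M f) {X Z : Finset α} (hXZ : X ⊆ Z) (hZ : Z ⊆ M) :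
    f X ≤ f Z := hf.2.2.1 X Z hXZ hZ

/-- In any polymatroid, for arbitrary subsets `A,B,P,Q,Y` of the
ground set, `Ing(A,B;P,Q) + Comm(A,B;Y) ≥ 0`. -/
theorem statement_13 {α : Type*} [DecidableEq α]
    (M : Finset α) (f : Finset α → ℝ) (hf : IsPolymatroid M f)
    (A B P Q Y : Finset α)
    (hA : A ⊆ M) (hB : B ⊆ M) (hP : P ⊆ M) (hQ : Q ⊆ M) (hY : Y ⊆ M) :
    0 ≤ ingExpr f A B P Q + commExpr f A B Y := by
  have hAB : A ∪ B ⊆ M := Finset.union_subset hA hB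
  have hAY : A ∪ Y ⊆ M := Finset.union_subset hA hY
  have hBY : B ∪ Y ⊆ M := Finset.union_subset hB hY
  have hYP : Y ∪ P ⊆ M := Finset.union_subset hY hP
  have hYQ : Y ∪ Q ⊆ M := Finset.union_subset hY hQ
  have hAYP : A ∪ Y ∪ P ⊆ M := Finset.union_subset hAY hP
  have hBYP : B ∪ Y ∪ P ⊆ M := Finset.union_subset hBY hP
  have hAYQ : A ∪ Y ∪ Q ⊆ M := Finset.union_subset hAY hQ
  have hBYQ : B ∪ Y ∪ Q ⊆ M := Finset.union_subset hBY hQ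
  have hABYP : A ∪ B ∪ Y ∪ P ⊆ M := Finset.union_subset (Finset.union_subset hAB hY) hP
  have hABYQ : A ∪ B ∪ Y ∪ Q ⊆ M := Finset.union_subset (Finset.union_subset hAB hY) hQ
  have hYPQ : Y ∪ P ∪ Q ⊆ M := Finset.union_subset hYP hQ
  have hAP : A ∪ P ⊆ M := Finset.union_subset hA hP
  have hBP : B ∪ P ⊆ M := Finset.union_subset hB hP
  have hAQ : A ∪ Q ⊆ M := Finset.union_subset hA hQ
  have hBQ : B ∪ Q ⊆ M := Finset.union_subset hB hQ
  have i1 : f (A ∪ B ∪ Y ∪ P) + f (Y ∪ P) ≤ f (A ∪ Y ∪ P) + f (B ∪ Y ∪ P) :=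
    poly_key hf hAYP hBYP (by ext x; simp; tauto) (by intro x hx; simp at hx ⊢; tauto)
      (by intro x hx; simp at hx ⊢; tauto)
  have i2 : f (B ∪ Y ∪ P) + f B ≤ f (B ∪ Y) + f (B ∪ P) :=
    poly_key hf hBY hBP (by ext x; simp; tauto) (by intro x hx; simp; tauto)
      (by intro x hx; simp; tauto)
  have i3 : f (A ∪ B ∪ P) ≤ f (A ∪ B ∪ Y ∪ P) :=
    poly_mono hf (by intro x hx; simp at hx ⊢; tauto) hABYP
  have i4 : f (A ∪ Y ∪ P) + f A ≤ f (A ∪ Y) + f (A ∪ P) :=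
    poly_key hf hAY hAP (by ext x; simp; tauto) (by intro x hx; simp; tauto)
      (by intro x hx; simp; tauto)
  have j1 : f (A ∪ B ∪ Y ∪ Q) + f (Y ∪ Q) ≤ f (A ∪ Y ∪ Q) + f (B ∪ Y ∪ Q) :=
    poly_key hf hAYQ hBYQ (by ext x; simp; tauto) (by intro x hx; simp at hx ⊢; tauto)
      (by intro x hx; simp at hx ⊢; tauto)
  have j2 : f (B ∪ Y ∪ Q) + f B ≤ f (B ∪ Y) + f (B ∪ Q) :=
    poly_key hf hBY hBQ (by ext x; simp; tauto) (by intro x hx; simp; tauto)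
      (by intro x hx; simp; tauto)
  have j3 : f (A ∪ B ∪ Q) ≤ f (A ∪ B ∪ Y ∪ Q) :=
    poly_mono hf (by intro x hx; simp at hx ⊢; tauto) hABYQ
  have j4 : f (A ∪ Y ∪ Q) + f A ≤ f (A ∪ Y) + f (A ∪ Q) :=
    poly_key hf hAY hAQ (by ext x; simp; tauto) (by intro x hx; simp; tauto)
      (by intro x hx; simp; tauto)
  have k1 : f (Y ∪ P ∪ Q) + f Y ≤ f (Y ∪ P) + f (Y ∪ Q) :=
    poly_key hf hYP hYQ (by ext x; simp; tauto) (by intro x hx; simp; tauto)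
      (by intro x hx; simp; tauto)
  have k2 : f (P ∪ Q) ≤ f (Y ∪ P ∪ Q) :=
    poly_mono hf (by intro x hx; simp at hx ⊢; tauto) hYPQ
  have e1 : Y ∪ A = A ∪ Y := Finset.union_comm _ _
  have e2 : Y ∪ B = B ∪ Y := Finset.union_comm _ _
  have e3 : Y ∪ (A ∪ B) = A ∪ B ∪ Y := Finset.union_comm _ _
  simp only [ingExpr, commExpr, condMI, condRk, e1, e2, e3]
  linarith
end

section
/- Let (f,M) be a polymatroid. Then for arbitrary subsets A,B,P,Q,Y,E of M, Ing(A,B;P,Q|E) + Comm(A,B;Y|E) ≥ 0. -/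
open scoped Classical

private lemma mi_nonneg' {α : Type*} [DecidableEq α] {M : Finset α} {f : Finset α → ℝ}
    (hf : IsPolymatroid M f) {X Y Z W : Finset α}
    (hXM : X ⊆ M) (hYM : Y ⊆ M) (hZX : Z ⊆ X) (hZY : Z ⊆ Y) (hW : X ∪ Y = W) :
    f Z + f W ≤ f X + f Y := by
  obtain ⟨-, -, hmono, hsub⟩ := hf
  have h1 := hsub X Y hXM hYM
  have h2 := hmono Z (X ∩ Y) (Finset.subset_inter hZX hZY)
    (Finset.inter_subset_left.trans hXM)
  rw [hW] at h1
  linarith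

set_option maxHeartbeats 1000000 in
/-- In any polymatroid, for arbitrary subsets `A,B,P,Q,Y,E` of
the ground set, `Ing(A,B;P,Q|E) + Comm(A,B;Y|E) ≥ 0`. -/
theorem statement_14 {α : Type*} [DecidableEq α]
    (M : Finset α) (f : Finset α → ℝ) (hf : IsPolymatroid M f)
    (A B P Q Y E : Finset α)
    (hA : A ⊆ M) (hB : B ⊆ M) (hP : P ⊆ M) (hQ : Q ⊆ M) (hY : Y ⊆ M) (hE : E ⊆ M) :
    0 ≤ ingExprCond f A B P Q E + commExprCond f A B Y E := by
  have hmono := hf.2.2.1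
  have sub : ∀ S T : Finset α, S ⊆ M → T ⊆ M → S ∪ T ⊆ M := fun S T hS hT =>
    Finset.union_subset hS hT
  have hAE := sub A E hA hE
  have hBE := sub B E hB hE
  have hYE := sub Y E hY hE
  have hPE := sub P E hP hE
  have hQE := sub Q E hQ hE
  have hAYE := sub A _ hA hYE
  have hBYE := sub B _ hB hYE
  have hPYE := sub P _ hP hYE
  have hQYE := sub Q _ hQ hYE
  have hAEP := sub A _ hA hPE
  have hBEP := sub B _ hB hPE
  have hAEQ := sub A _ hA hQE
  have hBEQ := sub B _ hB hQE
  have hAPYE := sub A _ hA hPYE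
  have hBPYE := sub B _ hB hPYE
  have hAQYE := sub A _ hA hQYE
  have hBQYE := sub B _ hB hQYE
  simp only [ingExprCond, commExprCond, condMI, condRk]
  have e1 : Y ∪ (A ∪ E) = A ∪ (Y ∪ E) := by ext x; simp only [Finset.mem_union]; tauto
  have e2 : Y ∪ (B ∪ E) = B ∪ (Y ∪ E) := by ext x; simp only [Finset.mem_union]; tauto
  have e3 : Y ∪ (A ∪ B ∪ E) = A ∪ B ∪ (Y ∪ E) := by ext x; simp only [Finset.mem_union]; tauto
  rw [e1, e2, e3]
  have i1 : f (P ∪ (Y ∪ E)) + f (A ∪ B ∪ (P ∪ (Y ∪ E))) ≤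
      f (A ∪ (P ∪ (Y ∪ E))) + f (B ∪ (P ∪ (Y ∪ E))) :=
    mi_nonneg' hf hAPYE hBPYE Finset.subset_union_right Finset.subset_union_right
      (by ext x; simp only [Finset.mem_union]; tauto)
  have i2 : f (Q ∪ (Y ∪ E)) + f (A ∪ B ∪ (Q ∪ (Y ∪ E))) ≤
      f (A ∪ (Q ∪ (Y ∪ E))) + f (B ∪ (Q ∪ (Y ∪ E))) :=
    mi_nonneg' hf hAQYE hBQYE Finset.subset_union_right Finset.subset_union_right
      (by ext x; simp only [Finset.mem_union]; tauto)
  have i3 : f (Y ∪ E) + f (P ∪ Q ∪ (Y ∪ E)) ≤ f (P ∪ (Y ∪ E)) + f (Q ∪ (Y ∪ E)) :=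
    mi_nonneg' hf hPYE hQYE Finset.subset_union_right Finset.subset_union_right
      (by ext x; simp only [Finset.mem_union]; tauto)
  have i4 : f (A ∪ E) + f (A ∪ (P ∪ (Y ∪ E))) ≤ f (A ∪ (P ∪ E)) + f (A ∪ (Y ∪ E)) :=
    mi_nonneg' hf hAEP hAYE
      (by intro x hx; simp only [Finset.mem_union] at *; tauto)
      (by intro x hx; simp only [Finset.mem_union] at *; tauto)
      (by ext x; simp only [Finset.mem_union]; tauto)
  have i5 : f (B ∪ E) + f (B ∪ (P ∪ (Y ∪ E))) ≤ f (B ∪ (P ∪ E)) + f (B ∪ (Y ∪ E)) :=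
    mi_nonneg' hf hBEP hBYE
      (by intro x hx; simp only [Finset.mem_union] at *; tauto)
      (by intro x hx; simp only [Finset.mem_union] at *; tauto)
      (by ext x; simp only [Finset.mem_union]; tauto)
  have i6 : f (A ∪ E) + f (A ∪ (Q ∪ (Y ∪ E))) ≤ f (A ∪ (Q ∪ E)) + f (A ∪ (Y ∪ E)) :=
    mi_nonneg' hf hAEQ hAYE
      (by intro x hx; simp only [Finset.mem_union] at *; tauto)
      (by intro x hx; simp only [Finset.mem_union] at *; tauto)
      (by ext x; simp only [Finset.mem_union]; tauto)
  have i7 : f (B ∪ E) + f (B ∪ (Q ∪ (Y ∪ E))) ≤ f (B ∪ (Q ∪ E)) + f (B ∪ (Y ∪ E)) :=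
    mi_nonneg' hf hBEQ hBYE
      (by intro x hx; simp only [Finset.mem_union] at *; tauto)
      (by intro x hx; simp only [Finset.mem_union] at *; tauto)
      (by ext x; simp only [Finset.mem_union]; tauto)
  have m8 : f (P ∪ Q ∪ E) ≤ f (P ∪ Q ∪ (Y ∪ E)) :=
    hmono _ _ (by intro x hx; simp only [Finset.mem_union] at *; tauto) (sub _ _ (sub P Q hP hQ) hYE)
  have m9 : f (A ∪ B ∪ (P ∪ E)) ≤ f (A ∪ B ∪ (P ∪ (Y ∪ E))) :=
    hmono _ _ (by intro x hx; simp only [Finset.mem_union] at *; tauto)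
      (sub _ _ (sub A B hA hB) hPYE)
  have m10 : f (A ∪ B ∪ (Q ∪ E)) ≤ f (A ∪ B ∪ (Q ∪ (Y ∪ E))) :=
    hmono _ _ (by intro x hx; simp only [Finset.mem_union] at *; tauto)
      (sub _ _ (sub A B hA hB) hQYE)
  linarith
end

section
/- Let f be any real-valued function on subsets of a finite set M. Then for arbitrary subsets A,B,P,Q,Y,E of M, the following identity of linear combinations of values of f holds: Ing(A,B;P,Q|E) + Comm(A,B;Y|E) = f(A,B|P∪Y∪E) + f(A,B|Q∪Y∪E) + f(P,Q|Y∪E) + f(P,Y|A∪E) + f(P,Y|B∪E) + f(Q,Y|A∪E) + f(Q,Y|B∪E) + f(Y|A∪B∪P∪E) + f(Y|A∪B∪Q∪E) + f(Y|P∪Q∪E). -/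
/-- For an arbitrary real-valued function `f` on subsets of a
finite set `M` and arbitrary subsets `A,B,P,Q,Y,E` of `M`, the expression
`Ing(A,B;P,Q|E) + Comm(A,B;Y|E)` equals the ten-term sum
`f(A,B|P∪Y∪E) + f(A,B|Q∪Y∪E) + f(P,Q|Y∪E) + f(P,Y|A∪E) + f(P,Y|B∪E) +
 f(Q,Y|A∪E) + f(Q,Y|B∪E) + f(Y|A∪B∪P∪E) + f(Y|A∪B∪Q∪E) + f(Y|P∪Q∪E)`. -/
theorem statement_15 {α : Type*} [DecidableEq α]
    (M : Finset α) (f : Finset α → ℝ)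
    (A B P Q Y E : Finset α)
    (hA : A ⊆ M) (hB : B ⊆ M) (hP : P ⊆ M) (hQ : Q ⊆ M) (hY : Y ⊆ M) (hE : E ⊆ M) :
    ingExprCond f A B P Q E + commExprCond f A B Y E =
      condMI f A B (P ∪ Y ∪ E) + condMI f A B (Q ∪ Y ∪ E) + condMI f P Q (Y ∪ E) +
      condMI f P Y (A ∪ E) + condMI f P Y (B ∪ E) +
      condMI f Q Y (A ∪ E) + condMI f Q Y (B ∪ E) +
      condRk f Y (A ∪ B ∪ P ∪ E) + condRk f Y (A ∪ B ∪ Q ∪ E) +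
      condRk f Y (P ∪ Q ∪ E) := by
  simp only [ingExprCond, commExprCond, condMI, condRk]
  simp only [Finset.union_assoc]
  ac_nf
  ring
end

section
/- Let (f,M) be a polymatroid, let F1,F2 be flats of (f,M) generating the modular cut 𝓜=𝓜(F1,F2), let S=F1∩F2, and assume S∉𝓜 and δ(F1,F2)=δ(𝓜)>0. Then there is a one-point extension (f1, M∪{a}) of (f,M) (with a∉M) that extracts the conditional common information of F1 and F2, i.e., Comm_{f1}(F1,F2;{a}|S)=0. -/
open scoped Classical

lemma clos_aux {α : Type*} [DecidableEq α] (M : Finset α) (f : Finset α → ℝ)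
    (hf : IsPolymatroid M f) (X : Finset α) (hX : X ⊆ M) :
    ∃ C : Finset α, X ⊆ C ∧ C ⊆ M ∧ f C = f X ∧ IsFlat M f C := by
  obtain ⟨hf0, hfnn, hfmono, hfsub⟩ := hf
  set C : Finset α := X ∪ M.filter (fun y => f (insert y X) = f X) with hC
  have hXC : X ⊆ C := Finset.subset_union_left
  have hCM : C ⊆ M := Finset.union_subset hX (Finset.filter_subset _ _)
  have claim : ∀ Y : Finset α, Y ⊆ M.filter (fun y => f (insert y X) = f X) →
      f (X ∪ Y) = f X := by
    intro Y
    induction Y using Finset.induction_on with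
    | empty => intro _; simp
    | @insert y Y hyY ih =>
      intro hsub
      have hy : y ∈ M.filter (fun y => f (insert y X) = f X) :=
        hsub (Finset.mem_insert_self _ _)
      have hyM : y ∈ M := (Finset.mem_filter.mp hy).1
      have hyf : f (insert y X) = f X := (Finset.mem_filter.mp hy).2
      have hYsub : Y ⊆ M.filter (fun y => f (insert y X) = f X) :=
        fun x hx => hsub (Finset.mem_insert_of_mem hx)
      have hYM : Y ⊆ M := fun x hx => (Finset.mem_filter.mp (hYsub hx)).1
      have ihY : f (X ∪ Y) = f X := ih hYsub
      have hXYM : X ∪ Y ⊆ M := Finset.union_subset hX hYM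
      have hyXM : insert y X ⊆ M := Finset.insert_subset hyM hX
      have hsubmod := hfsub (X ∪ Y) (insert y X) hXYM hyXM
      have he1 : (X ∪ Y) ∪ insert y X = insert y (X ∪ Y) := by ext x; simp only [Finset.mem_union, Finset.mem_insert]; tauto
      have he2 : X ⊆ (X ∪ Y) ∩ insert y X :=
        Finset.subset_inter Finset.subset_union_left (Finset.subset_insert _ _)
      have hm1 : f X ≤ f ((X ∪ Y) ∩ insert y X) :=
        hfmono _ _ he2 (fun x hx => hXYM (Finset.mem_of_mem_inter_left hx))
      have he3 : X ∪ insert y Y = insert y (X ∪ Y) := by ext x; simp only [Finset.mem_union, Finset.mem_insert]; tauto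
      have hub : f (insert y (X ∪ Y)) ≤ f X := by
        rw [he1] at hsubmod; linarith
      have hlb : f X ≤ f (insert y (X ∪ Y)) := by
        have := hfmono (X ∪ Y) (insert y (X ∪ Y)) (Finset.subset_insert _ _)
          (Finset.insert_subset hyM hXYM)
        linarith
      rw [he3]; linarith
  have hfC : f C = f X := by
    have := claim (M.filter (fun y => f (insert y X) = f X)) (Finset.Subset.refl _)
    simpa [hC] using this
  refine ⟨C, hXC, hCM, hfC, hCM, ?_⟩
  intro G hCG hGM
  obtain ⟨y, hyG, hyC⟩ := Finset.exists_of_ssubset hCG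
  have hyM : y ∈ M := hGM hyG
  have hyX : y ∉ X := fun h => hyC (hXC h)
  have hyne : f (insert y X) ≠ f X := by
    intro h
    exact hyC (Finset.mem_union_right _ (Finset.mem_filter.mpr ⟨hyM, h⟩))
  have hylt : f X < f (insert y X) := by
    have := hfmono X (insert y X) (Finset.subset_insert _ _) (Finset.insert_subset hyM hX)
    exact lt_of_le_of_ne this (Ne.symm hyne)
  have hsub2 : insert y X ⊆ G :=
    Finset.insert_subset hyG (fun x hx => hCG.subset (hXC hx))
  have := hfmono (insert y X) G hsub2 hGM
  rw [hfC]; linarith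

/-- Let `F₁, F₂` be flats generating the modular cut `𝓜`, let
`S = F₁ ∩ F₂ ∉ 𝓜`, and suppose `δ(F₁,F₂) = δ(𝓜) > 0`.  Then `(f, M)` has a
one-point extension `(f₁, M ∪ {a})` extracting the conditional common information
of `F₁` and `F₂`: `Comm_{f₁}(F₁, F₂; {a} | S) = 0`. -/
theorem statement_16 {α : Type*} [DecidableEq α] [Infinite α]
    (M : Finset α) (f : Finset α → ℝ) (hf : IsPolymatroid M f)
    (F₁ F₂ : Finset α) (hF₁ : IsFlat M f F₁) (hF₂ : IsFlat M f F₂)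
    (𝓜 : Set (Finset α)) (h𝓜 : IsModularCut M f 𝓜)
    (hF₁mem : F₁ ∈ 𝓜) (hF₂mem : F₂ ∈ 𝓜)
    (hgen : ∀ 𝓝 : Set (Finset α), IsModularCut M f 𝓝 → F₁ ∈ 𝓝 → F₂ ∈ 𝓝 → 𝓜 ⊆ 𝓝)
    (hS : F₁ ∩ F₂ ∉ 𝓜)
    (hδpos : 0 < modularDefect f F₁ F₂)
    (hmin : ∀ G₁ ∈ 𝓜, ∀ G₂ ∈ 𝓜, G₁ ∩ G₂ ∉ 𝓜 →
      modularDefect f F₁ F₂ ≤ modularDefect f G₁ G₂) :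
    ∃ a : α, a ∉ M ∧ ∃ f₁ : Finset α → ℝ,
      IsPolymatroid (insert a M) f₁ ∧
      (∀ A, A ⊆ M → f₁ A = f A) ∧
      commExprCond f₁ F₁ F₂ {a} (F₁ ∩ F₂) = 0 := by
  classical
  obtain ⟨a, ha⟩ := Infinite.exists_notMem_finset M
  obtain ⟨hf0, hfnn, hfmono, hfsub⟩ := hf
  obtain ⟨hflat, hup, -⟩ := h𝓜
  have hM1 : F₁ ⊆ M := hF₁.1
  have hM2 : F₂ ⊆ M := hF₂.1
  have hSM : F₁ ∩ F₂ ⊆ M := fun x hx => hM1 (Finset.mem_of_mem_inter_left hx)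
  have hδnn : (0:ℝ) ≤ modularDefect f F₁ F₂ := le_of_lt hδpos
  have hFM : ∀ F ∈ 𝓜, F ⊆ M := fun F hF => (hflat F hF).1
  set 𝓕 : Finset (Finset α) := M.powerset.filter (· ∈ 𝓜) with h𝓕
  have h𝓕mem : ∀ F, F ∈ 𝓕 ↔ F ∈ 𝓜 := by
    intro F
    constructor
    · intro h; exact (Finset.mem_filter.mp h).2
    · intro h; exact Finset.mem_filter.mpr ⟨Finset.mem_powerset.mpr (hFM F h), h⟩
  set g : Finset α → ℝ := fun A => if a ∈ A then
      (insert (f (A.erase a) + modularDefect f F₁ F₂)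
        (𝓕.image fun F => f (A.erase a ∪ F))).min' (Finset.insert_nonempty _ _)
    else f A with hgdef
  have hgpos : ∀ A, a ∈ A → g A =
      (insert (f (A.erase a) + modularDefect f F₁ F₂)
        (𝓕.image fun F => f (A.erase a ∪ F))).min' (Finset.insert_nonempty _ _) := by
    intro A h; simp only [hgdef]; rw [if_pos h]
  have hgnot : ∀ A, a ∉ A → g A = f A := by
    intro A h; simp only [hgdef]; rw [if_neg h]
  have hgle1 : ∀ A, a ∈ A → g A ≤ f (A.erase a) + modularDefect f F₁ F₂ := by
    intro A h; rw [hgpos A h]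
    exact Finset.min'_le _ _ (Finset.mem_insert_self _ _)
  have hgle2 : ∀ A, a ∈ A → ∀ F ∈ 𝓜, g A ≤ f (A.erase a ∪ F) := by
    intro A h F hF; rw [hgpos A h]
    exact Finset.min'_le _ _
      (Finset.mem_insert_of_mem (Finset.mem_image_of_mem _ ((h𝓕mem F).mpr hF)))
  have hgge : ∀ (A : Finset α) (c : ℝ), a ∈ A → c ≤ f (A.erase a) + modularDefect f F₁ F₂ →
      (∀ F ∈ 𝓜, c ≤ f (A.erase a ∪ F)) → c ≤ g A := by
    intro A c h h1 h2
    rw [hgpos A h]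
    apply Finset.le_min'
    intro y hy
    rcases Finset.mem_insert.mp hy with hy | hy
    · exact hy ▸ h1
    · obtain ⟨F, hF, rfl⟩ := Finset.mem_image.mp hy
      exact h2 F ((h𝓕mem F).mp hF)
  have hgcases : ∀ A, a ∈ A → g A = f (A.erase a) + modularDefect f F₁ F₂ ∨
      ∃ F ∈ 𝓜, g A = f (A.erase a ∪ F) := by
    intro A h
    have hm := Finset.min'_mem
      (insert (f (A.erase a) + modularDefect f F₁ F₂)
        (𝓕.image fun F => f (A.erase a ∪ F))) (Finset.insert_nonempty _ _)
    rw [← hgpos A h] at hm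
    rcases Finset.mem_insert.mp hm with h' | h'
    · exact Or.inl h'
    · obtain ⟨F, hF, hFe⟩ := Finset.mem_image.mp h'
      exact Or.inr ⟨F, (h𝓕mem F).mp hF, hFe.symm⟩
  -- basic subset helpers
  have hsubM : ∀ A : Finset α, A ⊆ insert a M → A.erase a ⊆ M :=
    fun A hA => Finset.subset_insert_iff.mp hA
  have hnotM : ∀ A : Finset α, A ⊆ insert a M → a ∉ A → A ⊆ M := by
    intro A hA h x hx
    rcases Finset.mem_insert.mp (hA hx) with rfl | hxM
    · exact absurd hx h
    · exact hxM
  -- the key rank lower bound on members of the cut containing S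
  have hkey : ∀ (n : ℕ) (F : Finset α), F.card = n → F ∈ 𝓜 → F₁ ∩ F₂ ⊆ F →
      f (F₁ ∩ F₂) + modularDefect f F₁ F₂ ≤ f F := by
    intro n
    induction n using Nat.strong_induction_on with
    | _ n ih =>
      intro F hcard hF hSF
      have hFMs : F ⊆ M := hFM F hF
      by_cases h1 : F ∩ F₁ ∈ 𝓜
      · by_cases hsub : F ⊆ F₁
        · by_cases h2 : F ∩ F₂ ∈ 𝓜
          · exfalso
            apply hS
            have e : F ∩ F₂ = F₁ ∩ F₂ := by
              apply Finset.Subset.antisymm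
              · exact Finset.subset_inter
                  (fun x hx => hsub (Finset.mem_of_mem_inter_left hx))
                  (fun x hx => Finset.mem_of_mem_inter_right hx)
              · exact Finset.subset_inter hSF Finset.inter_subset_right
            rwa [e] at h2
          · have hd := hmin F hF F₂ hF₂mem h2
            have m1 : f (F₁ ∩ F₂) ≤ f (F ∩ F₂) :=
              hfmono _ _ (Finset.subset_inter hSF Finset.inter_subset_right)
                (fun x hx => hFMs (Finset.mem_of_mem_inter_left hx))
            have m2 : f F₂ ≤ f (F ∪ F₂) :=
              hfmono _ _ Finset.subset_union_right (Finset.union_subset hFMs hM2)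
            have hd' : modularDefect f F F₂ = f F + f F₂ - f (F ∩ F₂) - f (F ∪ F₂) := rfl
            rw [hd'] at hd
            linarith
        · have hss : F ∩ F₁ ⊂ F := by
            constructor
            · exact Finset.inter_subset_left
            · intro hcon
              exact hsub (fun x hx => Finset.mem_of_mem_inter_right (hcon hx))
          have hlt : (F ∩ F₁).card < n := hcard ▸ Finset.card_lt_card hss
          have hih := ih _ hlt (F ∩ F₁) rfl h1
            (Finset.subset_inter hSF Finset.inter_subset_left)
          have := hfmono (F ∩ F₁) F Finset.inter_subset_left hFMs
          linarith
      · have hd := hmin F hF F₁ hF₁mem h1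
        have m1 : f (F₁ ∩ F₂) ≤ f (F ∩ F₁) :=
          hfmono _ _ (Finset.subset_inter hSF Finset.inter_subset_left)
            (fun x hx => hFMs (Finset.mem_of_mem_inter_left hx))
        have m2 : f F₁ ≤ f (F ∪ F₁) :=
          hfmono _ _ Finset.subset_union_right (Finset.union_subset hFMs hM1)
        have hd' : modularDefect f F F₁ = f F + f F₁ - f (F ∩ F₁) - f (F ∪ F₁) := rfl
        rw [hd'] at hd
        linarith
  have hkey' : ∀ F ∈ 𝓜, f (F₁ ∩ F₂) + modularDefect f F₁ F₂ ≤ f ((F₁ ∩ F₂) ∪ F) := by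
    intro F hF
    obtain ⟨C, hXC, hCM, hfC, hCflat⟩ := clos_aux M f ⟨hf0, hfnn, hfmono, hfsub⟩
      ((F₁ ∩ F₂) ∪ F) (Finset.union_subset hSM (hFM F hF))
    have hC𝓜 : C ∈ 𝓜 := hup F hF C hCflat (fun x hx => hXC (Finset.mem_union_right _ hx))
    have hk := hkey C.card C rfl hC𝓜 (fun x hx => hXC (Finset.mem_union_left _ hx))
    rw [hfC] at hk
    exact hk
  -- values of g
  have haF₁ : a ∉ F₁ := fun h => ha (hM1 h)
  have haF₂ : a ∉ F₂ := fun h => ha (hM2 h)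
  have haS : a ∉ F₁ ∩ F₂ := fun h => ha (hSM h)
  have hgF₁ : g (insert a F₁) = f F₁ := by
    apply le_antisymm
    · have h := hgle2 (insert a F₁) (Finset.mem_insert_self _ _) F₁ hF₁mem
      rwa [Finset.erase_insert haF₁, Finset.union_self] at h
    · refine hgge _ _ (Finset.mem_insert_self _ _) ?_ ?_
      · rw [Finset.erase_insert haF₁]; linarith
      · intro F hF
        rw [Finset.erase_insert haF₁]
        exact hfmono _ _ Finset.subset_union_left (Finset.union_subset hM1 (hFM F hF))
  have hgF₂ : g (insert a F₂) = f F₂ := by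
    apply le_antisymm
    · have h := hgle2 (insert a F₂) (Finset.mem_insert_self _ _) F₂ hF₂mem
      rwa [Finset.erase_insert haF₂, Finset.union_self] at h
    · refine hgge _ _ (Finset.mem_insert_self _ _) ?_ ?_
      · rw [Finset.erase_insert haF₂]; linarith
      · intro F hF
        rw [Finset.erase_insert haF₂]
        exact hfmono _ _ Finset.subset_union_left (Finset.union_subset hM2 (hFM F hF))
  have hgS : g (insert a (F₁ ∩ F₂)) = f (F₁ ∩ F₂) + modularDefect f F₁ F₂ := by
    apply le_antisymm
    · have h := hgle1 (insert a (F₁ ∩ F₂)) (Finset.mem_insert_self _ _)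
      rwa [Finset.erase_insert haS] at h
    · refine hgge _ _ (Finset.mem_insert_self _ _) ?_ ?_
      · rw [Finset.erase_insert haS]
      · intro F hF
        rw [Finset.erase_insert haS]
        exact hkey' F hF
  -- mixed submodularity case: a ∈ A, a ∉ B
  have hmix : ∀ A B : Finset α, A ⊆ insert a M → B ⊆ insert a M → a ∈ A → a ∉ B →
      g (A ∪ B) + g (A ∩ B) ≤ g A + g B := by
    intro A B hA hB haA haB
    have hA' : A.erase a ⊆ M := hsubM A hA
    have hB' : B ⊆ M := hnotM B hB haB
    have haU : a ∈ A ∪ B := Finset.mem_union_left _ haA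
    have haI : a ∉ A ∩ B := fun h => haB (Finset.mem_of_mem_inter_right h)
    have hUe : (A ∪ B).erase a = A.erase a ∪ B := by
      rw [Finset.erase_union_distrib, Finset.erase_eq_of_notMem haB]
    have hIe : A ∩ B = A.erase a ∩ B := by
      ext x
      simp only [Finset.mem_inter, Finset.mem_erase]
      constructor
      · rintro ⟨h1, h2⟩; exact ⟨⟨fun e => haB (e ▸ h2), h1⟩, h2⟩
      · tauto
    rw [hgnot _ haI, hgnot _ haB, hIe]
    rcases hgcases A haA with hc | ⟨F, hF, hc⟩
    · have h1 : g (A ∪ B) ≤ f (A.erase a ∪ B) + modularDefect f F₁ F₂ := by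
        have h := hgle1 (A ∪ B) haU; rwa [hUe] at h
      have h2 := hfsub (A.erase a) B hA' hB'
      rw [hc]; linarith
    · have hFm : F ⊆ M := hFM F hF
      have h1 : g (A ∪ B) ≤ f (A.erase a ∪ B ∪ F) := by
        have h := hgle2 (A ∪ B) haU F hF; rwa [hUe] at h
      have h2 := hfsub (A.erase a ∪ F) B (Finset.union_subset hA' hFm) hB'
      have e1 : A.erase a ∪ F ∪ B = A.erase a ∪ B ∪ F := by
        ext x; simp only [Finset.mem_union]; tauto
      have m1 : f (A.erase a ∩ B) ≤ f ((A.erase a ∪ F) ∩ B) :=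
        hfmono _ _ (Finset.inter_subset_inter Finset.subset_union_left (Finset.Subset.refl _))
          (fun x hx => hB' (Finset.mem_of_mem_inter_right hx))
      rw [hc]; rw [e1] at h2; linarith
  -- submodularity when a is in both sets
  have hboth : ∀ A B : Finset α, A ⊆ insert a M → B ⊆ insert a M → a ∈ A → a ∈ B →
      g (A ∪ B) + g (A ∩ B) ≤ g A + g B := by
    intro A B hA hB haA haB
    have hA' : A.erase a ⊆ M := hsubM A hA
    have hB' : B.erase a ⊆ M := hsubM B hB
    have haU : a ∈ A ∪ B := Finset.mem_union_left _ haA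
    have haI : a ∈ A ∩ B := Finset.mem_inter.mpr ⟨haA, haB⟩
    have hUe : (A ∪ B).erase a = A.erase a ∪ B.erase a := Finset.erase_union_distrib _ _ _
    have hIe : (A ∩ B).erase a = A.erase a ∩ B.erase a := by
      ext x; simp only [Finset.mem_erase, Finset.mem_inter]; tauto
    rcases hgcases A haA with hcA | ⟨F, hF, hcA⟩
    · rcases hgcases B haB with hcB | ⟨G, hG, hcB⟩
      · have h1 : g (A ∪ B) ≤ f (A.erase a ∪ B.erase a) + modularDefect f F₁ F₂ := by
          have h := hgle1 (A ∪ B) haU; rwa [hUe] at h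
        have h2 : g (A ∩ B) ≤ f (A.erase a ∩ B.erase a) + modularDefect f F₁ F₂ := by
          have h := hgle1 (A ∩ B) haI; rwa [hIe] at h
        have h3 := hfsub (A.erase a) (B.erase a) hA' hB'
        rw [hcA, hcB]; linarith
      · have hGm : G ⊆ M := hFM G hG
        have h1 : g (A ∪ B) ≤ f (A.erase a ∪ B.erase a ∪ G) := by
          have h := hgle2 (A ∪ B) haU G hG; rwa [hUe] at h
        have h2 : g (A ∩ B) ≤ f (A.erase a ∩ B.erase a) + modularDefect f F₁ F₂ := by
          have h := hgle1 (A ∩ B) haI; rwa [hIe] at h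
        have h3 := hfsub (A.erase a) (B.erase a ∪ G) hA' (Finset.union_subset hB' hGm)
        have e1 : A.erase a ∪ (B.erase a ∪ G) = A.erase a ∪ B.erase a ∪ G :=
          (Finset.union_assoc _ _ _).symm
        have m1 : f (A.erase a ∩ B.erase a) ≤ f (A.erase a ∩ (B.erase a ∪ G)) :=
          hfmono _ _ (Finset.inter_subset_inter (Finset.Subset.refl _) Finset.subset_union_left)
            (fun x hx => hA' (Finset.mem_of_mem_inter_left hx))
        rw [hcA, hcB]; rw [e1] at h3; linarith
    · rcases hgcases B haB with hcB | ⟨G, hG, hcB⟩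
      · have hFm : F ⊆ M := hFM F hF
        have h1 : g (A ∪ B) ≤ f (A.erase a ∪ B.erase a ∪ F) := by
          have h := hgle2 (A ∪ B) haU F hF; rwa [hUe] at h
        have h2 : g (A ∩ B) ≤ f (A.erase a ∩ B.erase a) + modularDefect f F₁ F₂ := by
          have h := hgle1 (A ∩ B) haI; rwa [hIe] at h
        have h3 := hfsub (A.erase a ∪ F) (B.erase a) (Finset.union_subset hA' hFm) hB'
        have e1 : A.erase a ∪ F ∪ B.erase a = A.erase a ∪ B.erase a ∪ F := by
          ext x; simp only [Finset.mem_union]; tauto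
        have m1 : f (A.erase a ∩ B.erase a) ≤ f ((A.erase a ∪ F) ∩ B.erase a) :=
          hfmono _ _ (Finset.inter_subset_inter Finset.subset_union_left (Finset.Subset.refl _))
            (fun x hx => hB' (Finset.mem_of_mem_inter_right hx))
        rw [hcA, hcB]; rw [e1] at h3; linarith
      · -- both minimizers come from the cut: use closures and minimality of the defect
        obtain ⟨C₁, hC₁sub, hC₁M, hC₁f, hC₁flat⟩ := clos_aux M f ⟨hf0, hfnn, hfmono, hfsub⟩
          (A.erase a ∪ F) (Finset.union_subset hA' (hFM F hF))
        obtain ⟨C₂, hC₂sub, hC₂M, hC₂f, hC₂flat⟩ := clos_aux M f ⟨hf0, hfnn, hfmono, hfsub⟩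
          (B.erase a ∪ G) (Finset.union_subset hB' (hFM G hG))
        have hC₁𝓜 : C₁ ∈ 𝓜 :=
          hup F hF C₁ hC₁flat (fun x hx => hC₁sub (Finset.mem_union_right _ hx))
        have hC₂𝓜 : C₂ ∈ 𝓜 :=
          hup G hG C₂ hC₂flat (fun x hx => hC₂sub (Finset.mem_union_right _ hx))
        have hAC : A.erase a ⊆ C₁ := fun x hx => hC₁sub (Finset.mem_union_left _ hx)
        have hBC : B.erase a ⊆ C₂ := fun x hx => hC₂sub (Finset.mem_union_left _ hx)
        have hU1 : g (A ∪ B) ≤ f (C₁ ∪ C₂) := by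
          have h := hgle2 (A ∪ B) haU C₁ hC₁𝓜
          rw [hUe] at h
          refine le_trans h (hfmono _ _ ?_ (Finset.union_subset hC₁M hC₂M))
          exact Finset.union_subset
            (Finset.union_subset (hAC.trans Finset.subset_union_left)
              (hBC.trans Finset.subset_union_right))
            Finset.subset_union_left
        rw [hcA, hcB, ← hC₁f, ← hC₂f]
        by_cases hCC : C₁ ∩ C₂ ∈ 𝓜
        · have hI1 : g (A ∩ B) ≤ f (C₁ ∩ C₂) := by
            have h := hgle2 (A ∩ B) haI (C₁ ∩ C₂) hCC
            rw [hIe] at h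
            have e : A.erase a ∩ B.erase a ∪ C₁ ∩ C₂ = C₁ ∩ C₂ :=
              Finset.union_eq_right.mpr (Finset.inter_subset_inter hAC hBC)
            rwa [e] at h
          have h3 := hfsub C₁ C₂ hC₁M hC₂M
          linarith
        · have hd := hmin C₁ hC₁𝓜 C₂ hC₂𝓜 hCC
          have hd' : modularDefect f C₁ C₂ = f C₁ + f C₂ - f (C₁ ∩ C₂) - f (C₁ ∪ C₂) := rfl
          rw [hd'] at hd
          have hI1 : g (A ∩ B) ≤ f (C₁ ∩ C₂) + modularDefect f F₁ F₂ := by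
            have h := hgle1 (A ∩ B) haI
            rw [hIe] at h
            have m : f (A.erase a ∩ B.erase a) ≤ f (C₁ ∩ C₂) :=
              hfmono _ _ (Finset.inter_subset_inter hAC hBC)
                (fun x hx => hC₁M (Finset.mem_of_mem_inter_left hx))
            linarith
          linarith
  refine ⟨a, ha, g, ⟨?_, ?_, ?_, ?_⟩, ?_, ?_⟩
  · rw [hgnot ∅ (Finset.notMem_empty a)]; exact hf0
  · intro A hA
    by_cases h : a ∈ A
    · refine hgge A 0 h ?_ ?_
      · have := hfnn _ (hsubM A hA); linarith
      · intro F hF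
        exact hfnn _ (Finset.union_subset (hsubM A hA) (hFM F hF))
    · rw [hgnot A h]; exact hfnn A (hnotM A hA h)
  · intro A B hAB hBM
    by_cases haB : a ∈ B
    · by_cases haA : a ∈ A
      · refine hgge B (g A) haB ?_ ?_
        · have h := hgle1 A haA
          have := hfmono _ _ (Finset.erase_subset_erase a hAB) (hsubM B hBM)
          linarith
        · intro F hF
          have h := hgle2 A haA F hF
          have := hfmono _ _
            (Finset.union_subset_union (Finset.erase_subset_erase a hAB) (Finset.Subset.refl F))
            (Finset.union_subset (hsubM B hBM) (hFM F hF))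
          linarith
      · rw [hgnot A haA]
        have hAB' : A ⊆ B.erase a :=
          fun x hx => Finset.mem_erase.mpr ⟨fun e => haA (e ▸ hx), hAB hx⟩
        refine hgge B (f A) haB ?_ ?_
        · have := hfmono _ _ hAB' (hsubM B hBM); linarith
        · intro F hF
          exact hfmono _ _ (hAB'.trans Finset.subset_union_left)
            (Finset.union_subset (hsubM B hBM) (hFM F hF))
    · have haA : a ∉ A := fun h => haB (hAB h)
      rw [hgnot A haA, hgnot B haB]
      exact hfmono A B hAB (hnotM B hBM haB)
  · intro A B hA hB
    by_cases haA : a ∈ A <;> by_cases haB : a ∈ B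
    · exact hboth A B hA hB haA haB
    · exact hmix A B hA hB haA haB
    · have h := hmix B A hB hA haB haA
      rw [Finset.union_comm B A, Finset.inter_comm B A] at h
      linarith
    · have haU : a ∉ A ∪ B := fun h => (Finset.mem_union.mp h).elim haA haB
      have haI : a ∉ A ∩ B := fun h => haA (Finset.mem_of_mem_inter_left h)
      rw [hgnot _ haU, hgnot _ haI, hgnot _ haA, hgnot _ haB]
      exact hfsub A B (hnotM A hA haA) (hnotM B hB haB)
  · intro A hA
    exact hgnot A (fun h => ha (hA h))
  · have r1 : F₁ ∪ (F₁ ∩ F₂) = F₁ := Finset.union_eq_left.mpr Finset.inter_subset_left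
    have r2 : F₂ ∪ (F₁ ∩ F₂) = F₂ := Finset.union_eq_left.mpr Finset.inter_subset_right
    have r3 : F₁ ∪ F₂ ∪ (F₁ ∩ F₂) = F₁ ∪ F₂ :=
      Finset.union_eq_left.mpr
        (fun x hx => Finset.mem_union_left _ (Finset.mem_of_mem_inter_left hx))
    have r4 : F₁ ∪ ({a} ∪ (F₁ ∩ F₂)) = insert a F₁ := by
      ext x
      simp only [Finset.mem_union, Finset.mem_singleton, Finset.mem_insert, Finset.mem_inter]
      tauto
    have r5 : F₂ ∪ ({a} ∪ (F₁ ∩ F₂)) = insert a F₂ := by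
      ext x
      simp only [Finset.mem_union, Finset.mem_singleton, Finset.mem_insert, Finset.mem_inter]
      tauto
    have r6 : F₁ ∪ F₂ ∪ ({a} ∪ (F₁ ∩ F₂)) = insert a (F₁ ∪ F₂) := by
      ext x
      simp only [Finset.mem_union, Finset.mem_singleton, Finset.mem_insert, Finset.mem_inter]
      tauto
    have r7 : {a} ∪ (F₁ ∩ F₂) = insert a (F₁ ∩ F₂) := (Finset.insert_eq _ _).symm
    have r8 : {a} ∪ (F₁ ∪ (F₁ ∩ F₂)) = insert a F₁ := by
      rw [r1]; exact (Finset.insert_eq _ _).symm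
    have r9 : {a} ∪ (F₂ ∪ (F₁ ∩ F₂)) = insert a F₂ := by
      rw [r2]; exact (Finset.insert_eq _ _).symm
    have r10 : {a} ∪ (F₁ ∪ F₂ ∪ (F₁ ∩ F₂)) = insert a (F₁ ∪ F₂) := by
      rw [r3]; exact (Finset.insert_eq _ _).symm
    have hgF₁' : g F₁ = f F₁ := hgnot F₁ haF₁
    have hgF₂' : g F₂ = f F₂ := hgnot F₂ haF₂
    have hgU' : g (F₁ ∪ F₂) = f (F₁ ∪ F₂) :=
      hgnot _ (fun h => ha ((Finset.union_subset hM1 hM2) h))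
    have e1 : F₁ ∪ insert a (F₁ ∩ F₂) = insert a F₁ := by
      rw [Finset.union_insert, r1]
    have e2 : F₂ ∪ insert a (F₁ ∩ F₂) = insert a F₂ := by
      rw [Finset.union_insert, r2]
    have e3 : F₁ ∪ F₂ ∪ insert a (F₁ ∩ F₂) = insert a (F₁ ∪ F₂) := by
      rw [Finset.union_insert, r3]
    have e4 : {a} ∪ F₁ = insert a F₁ := (Finset.insert_eq _ _).symm
    have e5 : {a} ∪ F₂ = insert a F₂ := (Finset.insert_eq _ _).symm
    have e6 : {a} ∪ (F₁ ∪ F₂) = insert a (F₁ ∪ F₂) := (Finset.insert_eq _ _).symm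
    simp only [commExprCond, condMI, condRk, r4, r5, r6, r7, r1, r2, r3, r8, r9, r10,
      e1, e2, e3, e4, e5, e6, hgF₁, hgF₂, hgS, hgF₁', hgF₂', hgU']
    simp only [modularDefect]
    ring
end
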